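/- arXiv:1907.03350 — 5 statements merged into one kernel-verified Lean document; each statement's English description precedes it below -/
import Mathlib

section
/- Let F be a finite field with q elements and let t ∈ F be either 2 or −2. Then the number of matrices γ ∈ SL₂(F) with trace(γ) = t equals q². -/
open Matrix

private lemma aux_diag (F : Type*) [Field F] (t s : F) (hs : s + s = t) (hs1 : s * s = 1)
    (a b c d : F) (hdet : a * d - b * c = 1) (htr : a + d = t) (hc : c = 0) :
    a = s ∧ d = s := by
  subst hc
  have hd : d = t - a := by linear_combination htr
  have h : (a - s) ^ 2 = 0 := by
    rw [hd] at hdet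
    linear_combination (-1 : F) * hdet + (-a) * hs + hs1
  have ha : a = s := by
    have := pow_eq_zero_iff (n := 2) (by norm_num) |>.mp h
    exact sub_eq_zero.mp this
  exact ⟨ha, by rw [hd, ← hs, ha]; ring⟩

private lemma aux (F : Type*) [Field F] [Fintype F] (t s : F) (hs : s + s = t)
    (hs1 : s * s = 1) :
    Nat.card {γ : Matrix.SpecialLinearGroup (Fin 2) F //
      Matrix.trace (γ : Matrix (Fin 2) (Fin 2) F) = t} = Fintype.card F ^ 2 := by
  set T := {γ : Matrix.SpecialLinearGroup (Fin 2) F //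
      Matrix.trace (γ : Matrix (Fin 2) (Fin 2) F) = t} with hT
  have hcard : Nat.card T = Nat.card (F × F) := by
    classical
    apply Nat.card_eq_of_bijective
      (fun γ => (if (γ.1 : Matrix (Fin 2) (Fin 2) F) 1 0 = 0
          then (γ.1 : Matrix (Fin 2) (Fin 2) F) 0 1
          else (γ.1 : Matrix (Fin 2) (Fin 2) F) 0 0,
        (γ.1 : Matrix (Fin 2) (Fin 2) F) 1 0))
    constructor
    · rintro ⟨⟨M, hM⟩, hMt⟩ ⟨⟨N, hN⟩, hNt⟩ h
      simp only [Prod.mk.injEq] at h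
      obtain ⟨h1, h2⟩ := h
      have hMdet : M 0 0 * M 1 1 - M 0 1 * M 1 0 = 1 := by
        rw [← Matrix.det_fin_two]; exact hM
      have hNdet : N 0 0 * N 1 1 - N 0 1 * N 1 0 = 1 := by
        rw [← Matrix.det_fin_two]; exact hN
      rw [Matrix.trace_fin_two] at hMt hNt
      simp only at h1 h2 hMt hNt
      ext i j
      by_cases hc : M 1 0 = 0
      · rw [hc] at h2
        have hc' : N 1 0 = 0 := h2.symm
        simp only [hc, hc', if_pos] at h1
        obtain ⟨ha, hd⟩ := aux_diag F t s hs hs1 _ _ _ _ hMdet hMt hc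
        obtain ⟨ha', hd'⟩ := aux_diag F t s hs hs1 _ _ _ _ hNdet hNt hc'
        fin_cases i <;> fin_cases j <;>
          simp_all
      · have hc' : N 1 0 ≠ 0 := by rw [← h2]; exact hc
        simp only [hc, hc', if_neg, if_false] at h1
        have ha : M 0 0 = N 0 0 := h1
        have hcc : M 1 0 = N 1 0 := h2
        have hd : M 1 1 = N 1 1 := by linear_combination hMt - hNt - ha
        have hb : M 0 1 = N 0 1 := by
          have : M 0 1 * M 1 0 = N 0 1 * N 1 0 := by
            linear_combination -hMdet + hNdet + M 1 1 * ha + N 0 0 * hd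
          rw [hcc] at this
          exact mul_right_cancel₀ hc' this
        fin_cases i <;> fin_cases j <;> simp_all
    · rintro ⟨x, y⟩
      by_cases hy : y = 0
      · refine ⟨⟨⟨!![s, x; 0, s], ?_⟩, ?_⟩, ?_⟩
        · rw [Matrix.det_fin_two_of]; linear_combination hs1
        · rw [Matrix.trace_fin_two]; simpa using hs
        · simp [hy]
      · refine ⟨⟨⟨!![x, (x * (t - x) - 1) / y; y, t - x], ?_⟩, ?_⟩, ?_⟩
        · rw [Matrix.det_fin_two_of]; field_simp; ring
        · rw [Matrix.trace_fin_two]; simp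
        · simp [hy]
  rw [hcard, Nat.card_prod, Nat.card_eq_fintype_card, sq]

/-- For a finite field `F` with `q` elements and `t = 2` or `t = -2`, the number of matrices
in `SL₂(F)` with trace `t` equals `q²`. -/
theorem stmt0 (F : Type*) [Field F] [Fintype F] (t : F) (ht : t = 2 ∨ t = -2) :
    Nat.card {γ : Matrix.SpecialLinearGroup (Fin 2) F //
      Matrix.trace (γ : Matrix (Fin 2) (Fin 2) F) = t} = Fintype.card F ^ 2 := by
  rcases ht with rfl | rfl
  · exact aux F 2 1 (by ring) (by ring)
  · exact aux F (-2) (-1) (by ring) (by ring)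
end

section
/- Let F be a finite field with q elements, let ψ : F → ℂ be a nontrivial additive character of F, and let x, y, z, w ∈ F with y ≠ 0. Then ∑_{γ ∈ SL₂(F)} ψ(γ₁₁·x + γ₁₂·y + γ₂₁·z + γ₂₂·w) = q · ∑_{c ∈ Fˣ} ψ(c·(z − y⁻¹wx) − c⁻¹·y), where γ₁₁, γ₁₂, γ₂₁, γ₂₂ denote the four entries of γ. -/
open Finset Matrix

/-- For a finite field `F` with `q` elements, a nontrivial additive character `ψ : F → ℂ`,
and `x y z w : F` with `y ≠ 0`,
`∑_{γ ∈ SL₂(F)} ψ(γ₀₀x + γ₀₁y + γ₁₀z + γ₁₁w) = q ∑_{c ∈ Fˣ} ψ(c(z − y⁻¹wx) − c⁻¹y)`. -/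
theorem stmt2 (F : Type*) [Field F] [Fintype F] [DecidableEq F]
    (ψ : AddChar F ℂ) (hψ : ψ ≠ 1) (x y z w : F) (hy : y ≠ 0) :
    ∑ γ : Matrix.SpecialLinearGroup (Fin 2) F,
        ψ ((γ : Matrix (Fin 2) (Fin 2) F) 0 0 * x + (γ : Matrix (Fin 2) (Fin 2) F) 0 1 * y +
           (γ : Matrix (Fin 2) (Fin 2) F) 1 0 * z + (γ : Matrix (Fin 2) (Fin 2) F) 1 1 * w)
      = (Fintype.card F : ℂ) *
        ∑ c : Fˣ, ψ ((c : F) * (z - y⁻¹ * w * x) - ((c⁻¹ : Fˣ) : F) * y) := by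
  classical
  have hprim : ψ.IsPrimitive := AddChar.IsPrimitive.of_ne_one hψ
  set q : ℂ := (Fintype.card F : ℂ) with hq
  set f : Matrix (Fin 2) (Fin 2) F → ℂ :=
    fun M => ψ (M 0 0 * x + M 0 1 * y + M 1 0 * z + M 1 1 * w) with hf
  set B : F → F → F := fun a c => if a = 0 then -c⁻¹ else 0 with hB
  set D : F → F → F := fun a c => if a = 0 then 0 else a⁻¹ with hD
  -- Step 1: sum over SL₂ equals sum over filter det = 1
  have h1 : (∑ γ : Matrix.SpecialLinearGroup (Fin 2) F, f (γ : Matrix (Fin 2) (Fin 2) F))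
      = ∑ M ∈ univ.filter (fun M : Matrix (Fin 2) (Fin 2) F => M.det = 1), f M := by
    rw [Finset.sum_subtype (p := fun M : Matrix (Fin 2) (Fin 2) F => M.det = 1) _ (by simp)]
    rfl
  -- Step 2: bijection with pairs ((a,c), t), (a,c) ≠ 0
  set J : (F × F) × F → Matrix (Fin 2) (Fin 2) F := fun p =>
    !![p.1.1, B p.1.1 p.1.2 + p.2 * p.1.1; p.1.2, D p.1.1 p.1.2 + p.2 * p.1.2] with hJ
  set I : Matrix (Fin 2) (Fin 2) F → (F × F) × F := fun M =>
    ((M 0 0, M 1 0), if M 0 0 = 0 then (M 1 0)⁻¹ * M 1 1 else (M 0 0)⁻¹ * M 0 1) with hI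
  have hJI : ∀ M ∈ univ.filter (fun M : Matrix (Fin 2) (Fin 2) F => M.det = 1),
      J (I M) = M := by
    rintro M hM
    simp only [mem_filter, mem_univ, true_and, det_fin_two] at hM
    rcases eq_or_ne (M 0 0) 0 with ha | ha
    · have hc : M 1 0 ≠ 0 := by
        intro hc; rw [ha, hc] at hM; simp at hM
      have hb : M 0 1 = -(M 1 0)⁻¹ := by
        rw [ha] at hM
        field_simp
        linear_combination -hM
      ext i j
      fin_cases i <;> fin_cases j <;>
        simp [hJ, hI, hB, hD, ha, hc, hb] <;> field_simp
    · ext i j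
      fin_cases i <;> fin_cases j <;>
        simp [hJ, hI, hB, hD, ha] <;> field_simp <;> linear_combination -hM
  have h2 : ∑ M ∈ univ.filter (fun M : Matrix (Fin 2) (Fin 2) F => M.det = 1), f M
      = ∑ p ∈ (univ.filter (fun p : F × F => p ≠ 0)) ×ˢ (univ : Finset F), f (J p) := by
    refine Finset.sum_nbij' I J ?_ ?_ hJI ?_ ?_
    · rintro M hM
      simp only [mem_filter, mem_univ, true_and, det_fin_two] at hM
      simp only [mem_product, mem_filter, mem_univ, true_and, hI, and_true]
      intro h
      rw [Prod.ext_iff] at h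
      simp only at h
      rw [h.1, h.2] at hM
      simp at hM
    · rintro p hp
      simp only [mem_product, mem_filter, mem_univ, true_and] at hp
      simp only [mem_filter, mem_univ, true_and, hJ, det_fin_two_of]
      rcases eq_or_ne p.1.1 0 with ha | ha
      · have hc : p.1.2 ≠ 0 := by
          intro hc; exact hp.1 (Prod.ext ha hc)
        simp only [hB, hD, ha, if_pos]
        field_simp
        ring
      · simp only [hB, hD, ha, if_neg, ite_false]
        field_simp
        ring
    · rintro p hp
      simp only [mem_product, mem_filter, mem_univ, true_and] at hp
      have e00 : J p 0 0 = p.1.1 := by simp [hJ]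
      have e10 : J p 1 0 = p.1.2 := by simp [hJ]
      have e01 : J p 0 1 = B p.1.1 p.1.2 + p.2 * p.1.1 := by simp [hJ]
      have e11 : J p 1 1 = D p.1.1 p.1.2 + p.2 * p.1.2 := by simp [hJ]
      refine Prod.ext (Prod.ext ?_ ?_) ?_
      · simpa only [hI] using e00
      · simpa only [hI] using e10
      · simp only [hI, e00, e10, e01, e11]
        rcases eq_or_ne p.1.1 0 with ha | ha
        · have hc : p.1.2 ≠ 0 := by
            intro hc; exact hp.1 (Prod.ext ha hc)
          rw [if_pos ha]
          simp only [hD, ha, ite_true, zero_add]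
          field_simp
        · rw [if_neg ha]
          simp only [hB, ha, ite_false, zero_add]
          field_simp
    · intro M hM
      rw [hJI M hM]
  -- Step 3: split product sum, collapse inner t-sum
  have h3 : ∑ p ∈ (univ.filter (fun p : F × F => p ≠ 0)) ×ˢ (univ : Finset F), f (J p)
      = ∑ p ∈ univ.filter (fun p : F × F => p ≠ 0),
          ψ (p.1 * x + B p.1 p.2 * y + p.2 * z + D p.1 p.2 * w) *
            (if p.1 * y + p.2 * w = 0 then q else 0) := by
    rw [Finset.sum_product]
    refine Finset.sum_congr rfl fun p hp => ?_
    have key : ∀ t : F, f (J (p, t))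
        = ψ (p.1 * x + B p.1 p.2 * y + p.2 * z + D p.1 p.2 * w) *
            ψ (t * (p.1 * y + p.2 * w)) := by
      intro t
      simp only [hf, hJ, of_apply, cons_val', cons_val_zero, cons_val_one, head_cons,
        empty_val', cons_val_fin_one, head_fin_const]
      rw [← AddChar.map_add_eq_mul]
      ring_nf
    simp_rw [key, ← Finset.mul_sum]
    congr 1
    rw [AddChar.sum_mulShift _ hprim]
    split_ifs <;> simp [hq]
  -- Step 4: restrict and biject with units
  rw [h1, h2, h3]
  have hunits : ∑ c : Fˣ, ψ ((c : F) * (z - y⁻¹ * w * x) - ((c⁻¹ : Fˣ) : F) * y)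
      = ∑ c ∈ univ.filter (fun c : F => c ≠ 0), ψ (c * (z - y⁻¹ * w * x) - c⁻¹ * y) := by
    refine Finset.sum_nbij' (fun c : Fˣ => (c : F))
      (fun c => if h : c = 0 then 1 else Units.mk0 c h) ?_ ?_ ?_ ?_ ?_
    · intro c _; simp [Units.ne_zero]
    · intro c _; simp
    · intro c _; simp [Units.ne_zero c]
    · intro c hc
      simp only [mem_filter, mem_univ, true_and] at hc
      simp [hc]
    · intro c _
      congr 1
      rw [← Units.val_inv_eq_inv_val]
  rw [hunits, Finset.mul_sum]
  have hsplit : ∀ p : F × F,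
      ψ (p.1 * x + B p.1 p.2 * y + p.2 * z + D p.1 p.2 * w) *
          (if p.1 * y + p.2 * w = 0 then q else 0)
        = if p.1 * y + p.2 * w = 0 then
            ψ (p.1 * x + B p.1 p.2 * y + p.2 * z + D p.1 p.2 * w) * q else 0 := by
    intro p; split_ifs <;> simp
  simp_rw [hsplit]
  rw [← Finset.sum_filter, Finset.filter_filter]
  refine Finset.sum_nbij' (fun p : F × F => p.2)
    (fun c : F => (-(c * w * y⁻¹), c)) ?_ ?_ ?_ ?_ ?_
  · rintro p hp
    simp only [mem_filter, mem_univ, true_and] at hp ⊢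
    intro hc
    rw [hc, zero_mul, add_zero, mul_eq_zero] at hp
    rcases hp.2 with h | h
    · exact hp.1 (Prod.ext h hc)
    · exact hy h
  · intro c hc
    simp only [mem_filter, mem_univ, true_and] at hc ⊢
    constructor
    · intro h
      rw [Prod.ext_iff] at h
      exact hc h.2
    · field_simp
      ring
  · rintro p hp
    simp only [mem_filter, mem_univ, true_and] at hp
    have : p.1 = -(p.2 * w * y⁻¹) := by
      field_simp
      linear_combination hp.2
    exact Prod.ext this.symm rfl
  · intro c _; rfl
  · rintro p hp
    simp only [mem_filter, mem_univ, true_and] at hp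
    have hc : p.2 ≠ 0 := by
      intro hc
      rw [hc, zero_mul, add_zero, mul_eq_zero] at hp
      rcases hp.2 with h | h
      · exact hp.1 (Prod.ext h hc)
      · exact hy h
    have ha : p.1 = -(p.2 * w * y⁻¹) := by
      field_simp
      linear_combination hp.2
    rw [mul_comm]
    congr 2
    rcases eq_or_ne p.1 0 with h0 | h0
    · have hw : w = 0 := by
        rw [h0] at ha
        have h2 : p.2 * w * y⁻¹ = 0 := neg_eq_zero.mp ha.symm
        rcases mul_eq_zero.mp h2 with h | h
        · rcases mul_eq_zero.mp h with h | h
          · exact absurd h hc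
          · exact h
        · exact absurd (inv_eq_zero.mp h) hy
      simp only [hB, hD, h0, if_pos, ite_true, hw]
      ring
    · have hw : w ≠ 0 := by
        intro hw; rw [hw] at ha; simp at ha; exact h0 ha
      simp only [hB, hD, h0, ite_false]
      rw [ha]
      field_simp
      ring
end

section
/- The group SL₂(ℤ[i]) is generated by the four matrices T₁ = [[1,1],[0,1]], Tᵢ = [[1,i],[0,1]], S = [[0,−1],[1,0]], and Q = [[−i,0],[0,i]]; that is, the subgroup of SL₂(ℤ[i]) generated by {T₁, Tᵢ, S, Q} is the whole group. -/
open Matrix Zsqrtd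

namespace SL2GenAux

abbrev SL2 := Matrix.SpecialLinearGroup (Fin 2) GaussianInt

def u (x : GaussianInt) : SL2 :=
  ⟨!![1, x; 0, 1], by simp [Matrix.det_fin_two_of]⟩

lemma u_mul (x y : GaussianInt) : u x * u y = u (x + y) := by
  apply Subtype.ext
  show (u x).1 * (u y).1 = (u (x+y)).1
  simp only [u]
  refine Matrix.ext fun i j => ?_
  fin_cases i <;> fin_cases j <;> simp [Matrix.mul_apply, Fin.sum_univ_two, add_comm]

def U : Multiplicative GaussianInt →* SL2 :=
  MonoidHom.mk' (fun x => u x.toAdd) (fun a b => by rw [u_mul]; rfl)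

lemma u_zsmul (n : ℤ) (x : GaussianInt) : u (n • x) = (u x) ^ n := by
  have : u (n • x) = U (Multiplicative.ofAdd x ^ n) := by
    simp [U, MonoidHom.mk'_apply]
  rw [this, map_zpow]
  rfl

lemma u_zpow (n : ℤ) (x : GaussianInt) : u ((n : GaussianInt) * x) = (u x) ^ n := by
  rw [← zsmul_eq_mul]; exact u_zsmul n x

def T1 : SL2 := ⟨!![1, 1; 0, 1], by simp [Matrix.det_fin_two_of]⟩
def Ti : SL2 := ⟨!![1, Zsqrtd.sqrtd; 0, 1], by simp [Matrix.det_fin_two_of]⟩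
def S : SL2 := ⟨!![0, -1; 1, 0], by simp [Matrix.det_fin_two_of]⟩
def Q : SL2 := ⟨!![-Zsqrtd.sqrtd, 0; 0, Zsqrtd.sqrtd], by simp [Matrix.det_fin_two_of]⟩

def H : Subgroup SL2 := Subgroup.closure {T1, Ti, S, Q}

lemma hT1 : T1 ∈ H := Subgroup.subset_closure (by simp)
lemma hTi : Ti ∈ H := Subgroup.subset_closure (by simp)
lemma hS : S ∈ H := Subgroup.subset_closure (by simp)
lemma hQ : Q ∈ H := Subgroup.subset_closure (by simp)

lemma u_one : u 1 = T1 := rfl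
lemma u_i : u Zsqrtd.sqrtd = Ti := rfl

lemma u_mem (x : GaussianInt) : u x ∈ H := by
  have hx : x = (x.re : GaussianInt) * 1 + (x.im : GaussianInt) * Zsqrtd.sqrtd := by
    ext <;> simp
  rw [hx, ← u_mul, u_zpow, u_zpow, u_one, u_i]
  exact mul_mem (zpow_mem hT1 _) (zpow_mem hTi _)

lemma sqrtd_sq : (Zsqrtd.sqrtd : GaussianInt) * Zsqrtd.sqrtd = -1 := by
  ext <;> simp

lemma unit_cases {a : GaussianInt} (h : a.re * a.re + a.im * a.im = 1) :
    a = 1 ∨ a = -1 ∨ a = Zsqrtd.sqrtd ∨ a = -Zsqrtd.sqrtd := by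
  obtain ⟨r, s⟩ := a
  simp only at h
  have h1 : -1 ≤ r := by nlinarith
  have h2 : r ≤ 1 := by nlinarith
  have key : ∀ t : ℤ, t * t = 1 → t = 1 ∨ t = -1 := fun t ht =>
    Int.isUnit_iff.1 (IsUnit.of_mul_eq_one t ht)
  interval_cases r
  · have hs : s = 0 := mul_self_eq_zero.1 (by linarith)
    subst hs; right; left; ext <;> simp
  · have hs : s * s = 1 := by linarith
    rcases key s hs with h | h <;> subst h
    · right; right; left; ext <;> simp
    · right; right; right; ext <;> simp
  · have hs : s = 0 := mul_self_eq_zero.1 (by linarith)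
    subst hs; left; ext <;> simp

lemma eq_of_entries (A B : SL2) (h00 : A.1 0 0 = B.1 0 0) (h01 : A.1 0 1 = B.1 0 1)
    (h10 : A.1 1 0 = B.1 1 0) (h11 : A.1 1 1 = B.1 1 1) : A = B := by
  apply Subtype.ext
  refine Matrix.ext fun i j => ?_
  fin_cases i <;> fin_cases j <;> assumption

lemma mem_H : ∀ (n : ℕ) (A : SL2), (A.1 1 0).norm.natAbs = n → A ∈ H := by
  intro n
  induction n using Nat.strong_induction_on with
  | _ n ih =>
    intro A hA
    have hdet : A.1 0 0 * A.1 1 1 - A.1 0 1 * A.1 1 0 = 1 := by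
      have := A.2
      rwa [Matrix.det_fin_two] at this
    by_cases hc : A.1 1 0 = 0
    · -- upper triangular case
      rw [hc, mul_zero, sub_zero] at hdet
      -- a is a unit
      have hnorm : (A.1 0 0).norm * (A.1 1 1).norm = 1 := by
        rw [← Zsqrtd.norm_mul, hdet, Zsqrtd.norm_one]
      have hnn : 0 ≤ (A.1 0 0).norm := Zsqrtd.norm_nonneg (by norm_num) _
      have ha1 : (A.1 0 0).norm = 1 := by
        rcases Int.isUnit_iff.1 (IsUnit.of_mul_eq_one _ hnorm) with h | h
        · exact h
        · omega
      have hsum : (A.1 0 0).re * (A.1 0 0).re + (A.1 0 0).im * (A.1 0 0).im = 1 := by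
        have := ha1
        rw [Zsqrtd.norm_def] at this
        linarith
      rcases unit_cases hsum with ha | ha | ha | ha <;> rw [ha] at hdet
      · -- a = 1, d = 1, A = u b
        have hd : A.1 1 1 = 1 := by rw [one_mul] at hdet; exact hdet
        have : A = u (A.1 0 1) := by
          apply eq_of_entries <;> simp [u, ha, hc, hd]
        rw [this]; exact u_mem _
      · -- a = -1, d = -1, A = Q^2 * u (-b)
        have hd : A.1 1 1 = -1 := by linear_combination -hdet
        have : A = Q ^ 2 * u (-(A.1 0 1)) := by
          apply eq_of_entries <;>
            simp only [Matrix.SpecialLinearGroup.coe_mul, Matrix.SpecialLinearGroup.coe_pow] <;> simp [u, Q, pow_two, Matrix.SpecialLinearGroup.coe_mul, ha, hc, hd, Matrix.mul_apply, Fin.sum_univ_two] <;>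
              ext <;> simp [Zsqrtd.re_mul, Zsqrtd.im_mul] <;> ring
        rw [this]
        exact mul_mem (pow_mem hQ 2) (u_mem _)
      · -- a = i, d = -i, A = Q^3 * u (-i * b)
        have hd : A.1 1 1 = -Zsqrtd.sqrtd := by
          linear_combination (-Zsqrtd.sqrtd) * hdet + (A.1 1 1) * sqrtd_sq
        have : A = Q ^ 3 * u (-Zsqrtd.sqrtd * A.1 0 1) := by
          apply eq_of_entries <;>
            simp only [Matrix.SpecialLinearGroup.coe_mul, Matrix.SpecialLinearGroup.coe_pow] <;> simp [u, Q, pow_succ, pow_two, Matrix.SpecialLinearGroup.coe_mul, ha, hc, hd, Matrix.mul_apply, Fin.sum_univ_two] <;>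
              ext <;> simp [Zsqrtd.re_mul, Zsqrtd.im_mul] <;> ring
        rw [this]
        exact mul_mem (pow_mem hQ 3) (u_mem _)
      · -- a = -i, d = i, A = Q * u (i * b)
        have hd : A.1 1 1 = Zsqrtd.sqrtd := by
          linear_combination Zsqrtd.sqrtd * hdet + (A.1 1 1) * sqrtd_sq
        have : A = Q * u (Zsqrtd.sqrtd * A.1 0 1) := by
          apply eq_of_entries <;>
            simp only [Matrix.SpecialLinearGroup.coe_mul, Matrix.SpecialLinearGroup.coe_pow] <;> simp [u, Q, Matrix.SpecialLinearGroup.coe_mul, ha, hc, hd, Matrix.mul_apply, Fin.sum_univ_two] <;>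
              ext <;> simp [Zsqrtd.re_mul, Zsqrtd.im_mul] <;> ring
        rw [this]
        exact mul_mem hQ (u_mem _)
    · -- Euclidean step
      set q : GaussianInt := A.1 0 0 / A.1 1 0 with hq
      set B : SL2 := S * u (-q) * A with hB
      have hB10 : B.1 1 0 = A.1 0 0 % A.1 1 0 := by
        rw [GaussianInt.mod_def]
        simp only [hB, Matrix.SpecialLinearGroup.coe_mul]; simp [hB, S, u, Matrix.SpecialLinearGroup.coe_mul, Matrix.mul_apply, Fin.sum_univ_two]
        ring
      have hlt : (B.1 1 0).norm.natAbs < n := by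
        rw [hB10, ← hA]
        exact GaussianInt.natAbs_norm_mod_lt _ hc
      have hBH : B ∈ H := ih _ hlt B rfl
      have hAeq : A = (S * u (-q))⁻¹ * B := (inv_mul_cancel_left _ _).symm
      rw [hAeq]
      exact mul_mem (inv_mem (mul_mem hS (u_mem _))) hBH

end SL2GenAux

/-- `SL₂(ℤ[i])` is generated by `T₁ = [[1,1],[0,1]]`, `Tᵢ = [[1,i],[0,1]]`,
`S = [[0,−1],[1,0]]`, and `Q = [[−i,0],[0,i]]`, where `i = Zsqrtd.sqrtd` is the
imaginary unit in the Gaussian integers. -/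
theorem stmt4 :
    Subgroup.closure
      ({⟨!![1, 1; 0, 1], by simp [Matrix.det_fin_two_of]⟩,
        ⟨!![1, Zsqrtd.sqrtd; 0, 1], by simp [Matrix.det_fin_two_of]⟩,
        ⟨!![0, -1; 1, 0], by simp [Matrix.det_fin_two_of]⟩,
        ⟨!![-Zsqrtd.sqrtd, 0; 0, Zsqrtd.sqrtd], by simp [Matrix.det_fin_two_of]⟩} :
        Set (Matrix.SpecialLinearGroup (Fin 2) GaussianInt)) = ⊤ := by
  rw [eq_top_iff]
  intro A _
  exact SL2GenAux.mem_H _ A rfl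
end

section
/- For every ε > 0 there is a constant C > 0 such that for all real X ≥ 2 and every t ∈ ℤ[i], the number of matrices g = [[a,b],[c,d]] ∈ SL₂(ℤ[i]) with |a|² + |b|² + |c|² + |d|² < X² and a + d = t is at most C·X^{2+ε}. -/
open UniqueFactorizationMonoid Finset

noncomputable instance : NormalizationMonoid GaussianInt :=
  (UniqueFactorizationMonoid.normalizationMonoid : StrongNormalizationMonoid GaussianInt).toNormalizationMonoid

/-- The natural-number norm of a Gaussian integer, as a monoid hom. -/
def gnorm : GaussianInt →* ℕ where
  toFun z := z.norm.natAbs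
  map_one' := by simp
  map_mul' x y := by beta_reduce; rw [Zsqrtd.norm_mul, Int.natAbs_mul]

/-- The four units of ℤ[i]. -/
def U4 : Finset GaussianInt := {⟨1,0⟩, ⟨-1,0⟩, ⟨0,1⟩, ⟨0,-1⟩}

lemma mem_U4 {u : GaussianInt} (h : u ∣ 1) : u ∈ U4 := by
  have hu : IsUnit u := isUnit_of_dvd_one h
  have h1 : u.norm.natAbs = 1 := Zsqrtd.norm_eq_one_iff.mpr hu
  rw [GaussianInt.natAbs_norm_eq] at h1
  have hre := Int.natAbs_eq u.re
  have him := Int.natAbs_eq u.im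
  have hx1 : u.re.natAbs ≤ 1 := by nlinarith
  have hy1 : u.im.natAbs ≤ 1 := by nlinarith
  have : u = (⟨1,0⟩ : GaussianInt) ∨ u = ⟨-1,0⟩ ∨ u = ⟨0,1⟩ ∨ u = ⟨0,-1⟩ := by
    simp only [Zsqrtd.ext_iff]
    interval_cases hx : u.re.natAbs <;> interval_cases hy : u.im.natAbs <;>
      simp at h1 hre him <;> omega
  rcases this with h|h|h|h <;> subst h <;> decide

lemma card_dvd_le (m : GaussianInt) (hm : m ≠ 0) :
    Nat.card {b : GaussianInt // b ∣ m} ≤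
      4 * ∏ π ∈ (normalizedFactors m).toFinset, ((normalizedFactors m).count π + 1) := by
  classical
  set F := normalizedFactors m with hF
  have key : ∀ b : {b : GaussianInt // b ∣ m},
      b.1 ≠ 0 ∧ normalizedFactors b.1 ≤ F ∧
      (normalizedFactors b.1).prod * (b.1 / (normalizedFactors b.1).prod) = b.1 ∧
      (b.1 / (normalizedFactors b.1).prod) ∣ 1 := by
    rintro ⟨b, hb⟩
    have hb0 : b ≠ 0 := fun h => hm (zero_dvd_iff.mp (h ▸ hb))
    have hle : normalizedFactors b ≤ F :=
      (dvd_iff_normalizedFactors_le_normalizedFactors hb0 hm).mp hb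
    have hassoc : Associated (normalizedFactors b).prod b := prod_normalizedFactors hb0
    have hP0 : (normalizedFactors b).prod ≠ 0 := fun h => hb0 (by
      rcases hassoc with ⟨u, hu⟩; rw [← hu, h, zero_mul])
    have hdvd : (normalizedFactors b).prod ∣ b := hassoc.dvd
    have hmul : (normalizedFactors b).prod * (b / (normalizedFactors b).prod) = b :=
      EuclideanDomain.mul_div_cancel' hP0 hdvd
    refine ⟨hb0, hle, hmul, ?_⟩
    rcases hassoc with ⟨u, hu⟩
    have : (b / (normalizedFactors b).prod) = (u : GaussianInt) :=
      mul_left_cancel₀ hP0 (by rw [hmul, hu])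
    rw [this]; exact isUnit_iff_dvd_one.mp u.isUnit
  let f : {b : GaussianInt // b ∣ m} →
      ((Π π : F.toFinset, Fin (F.count π.1 + 1)) × U4) := fun b =>
    ⟨fun π => ⟨(normalizedFactors b.1).count π.1,
      Nat.lt_succ_of_le (Multiset.le_iff_count.mp (key b).2.1 π.1)⟩,
     ⟨b.1 / (normalizedFactors b.1).prod, mem_U4 (key b).2.2.2⟩⟩
  have hinj : Function.Injective f := by
    rintro b₁ b₂ hf
    have h1 : ∀ π : F.toFinset,
        (normalizedFactors b₁.1).count π.1 = (normalizedFactors b₂.1).count π.1 := by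
      intro π
      have := congrFun (congrArg Prod.fst hf) π
      exact congrArg Fin.val this
    have h2 : b₁.1 / (normalizedFactors b₁.1).prod = b₂.1 / (normalizedFactors b₂.1).prod :=
      congrArg Subtype.val (congrArg Prod.snd hf)
    have hnf : normalizedFactors b₁.1 = normalizedFactors b₂.1 := by
      ext π
      by_cases hπ : π ∈ F.toFinset
      · exact h1 ⟨π, hπ⟩
      · have hπ' : π ∉ F := fun h => hπ (Multiset.mem_toFinset.mpr h)
        have c1 : (normalizedFactors b₁.1).count π = 0 :=
          Nat.le_zero.mp ((Multiset.le_iff_count.mp (key b₁).2.1 π).trans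
            (le_of_eq (Multiset.count_eq_zero_of_notMem hπ')))
        have c2 : (normalizedFactors b₂.1).count π = 0 :=
          Nat.le_zero.mp ((Multiset.le_iff_count.mp (key b₂).2.1 π).trans
            (le_of_eq (Multiset.count_eq_zero_of_notMem hπ')))
        rw [c1, c2]
    apply Subtype.ext
    calc b₁.1 = (normalizedFactors b₁.1).prod * (b₁.1 / (normalizedFactors b₁.1).prod) :=
          (key b₁).2.2.1.symm
      _ = (normalizedFactors b₂.1).prod * (b₂.1 / (normalizedFactors b₂.1).prod) := by
          rw [hnf] at h2 ⊢; rw [h2]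
      _ = b₂.1 := (key b₂).2.2.1
  haveI : Finite GaussianIntˣ := by
    refine Finite.of_injective (fun u : GaussianIntˣ =>
      (⟨(u : GaussianInt), mem_U4 (isUnit_iff_dvd_one.mp u.isUnit)⟩ : U4)) ?_
    intro u v huv
    exact Units.ext (congrArg Subtype.val huv)
  haveI : Fintype GaussianIntˣ := Fintype.ofFinite _
  haveI : Fintype {b : GaussianInt // b ∣ m} := UniqueFactorizationMonoid.fintypeSubtypeDvd m hm
  have hcard := Fintype.card_le_of_injective f hinj
  rw [Nat.card_eq_fintype_card]
  refine hcard.trans ?_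
  rw [Fintype.card_prod, Fintype.card_coe]
  have : Fintype.card (Π π : F.toFinset, Fin (F.count π.1 + 1)) =
      ∏ π ∈ F.toFinset, (F.count π + 1) := by
    rw [Fintype.card_pi]
    simp only [Fintype.card_fin]
    exact Finset.prod_attach F.toFinset (fun π => F.count π + 1)
  rw [this]
  have : U4.card = 4 := by decide
  rw [this, mul_comm]

lemma gnorm_factorization (m : GaussianInt) (hm : m ≠ 0) :
    gnorm m = ∏ π ∈ (normalizedFactors m).toFinset,
      gnorm π ^ ((normalizedFactors m).count π) := by
  classical
  obtain ⟨u, hu⟩ := prod_normalizedFactors hm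
  have h1 : gnorm m = gnorm (normalizedFactors m).prod * gnorm u := by
    rw [← map_mul, hu]
  have h2 : gnorm (u : GaussianInt) = 1 := Zsqrtd.norm_eq_one_iff.mpr u.isUnit
  rw [h1, h2, mul_one, ← Multiset.prod_hom _ gnorm]
  exact Finset.prod_multiset_map_count _ _

lemma perprime (ε : ℝ) (hε : 0 < ε) (q c : ℕ) (hq : 2 ≤ q) :
    ((c : ℝ) + 1) ≤ (if (q : ℝ) < (2:ℝ) ^ ((1:ℝ)/ε) then (1 + 1/(ε * Real.log 2)) else 1)
      * (((q : ℝ) ^ c) ^ ε) := by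
  have hq1 : (1:ℝ) ≤ (q:ℝ) := by exact_mod_cast Nat.one_le_of_lt hq
  have hq2 : (2:ℝ) ≤ (q:ℝ) := by exact_mod_cast hq
  have hlog2 : 0 < Real.log 2 := Real.log_pos one_lt_two
  have hqc : (0:ℝ) ≤ (q:ℝ)^c := by positivity
  split_ifs with hB
  · -- small prime case
    have h2c : ((2:ℝ)^c) ^ ε ≤ ((q:ℝ)^c) ^ ε := by
      apply Real.rpow_le_rpow (by positivity) (pow_le_pow_left₀ (by norm_num) hq2 c) hε.le
    have hexp : ((2:ℝ)^c) ^ ε = Real.exp (ε * (c * Real.log 2)) := by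
      rw [← Real.rpow_natCast 2 c, ← Real.rpow_mul (by norm_num), Real.rpow_def_of_pos (by norm_num)]
      ring_nf
    have hlb : 1 + ε * (c * Real.log 2) ≤ ((2:ℝ)^c) ^ ε := by
      rw [hexp]
      have := Real.add_one_le_exp (ε * (c * Real.log 2))
      linarith
    have hM : (0:ℝ) < 1 + 1/(ε * Real.log 2) := by positivity
    calc ((c:ℝ) + 1) ≤ (1 + 1/(ε * Real.log 2)) * (1 + ε * (c * Real.log 2)) := by
          have key : (1 + 1/(ε * Real.log 2)) * (1 + ε * (c * Real.log 2))
              = 1 + 1/(ε * Real.log 2) + ε * (c * Real.log 2) + (c:ℝ) := by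
            field_simp
            ring
          have h1 : (0:ℝ) ≤ 1/(ε * Real.log 2) := by positivity
          have h2 : (0:ℝ) ≤ ε * (c * Real.log 2) := by positivity
          rw [key]; linarith
      _ ≤ (1 + 1/(ε * Real.log 2)) * (((q:ℝ)^c) ^ ε) := by
          apply mul_le_mul_of_nonneg_left (hlb.trans h2c) hM.le
  · -- large prime case
    push_neg at hB
    have hqe : (2:ℝ) ≤ (q:ℝ) ^ ε := by
      calc (2:ℝ) = ((2:ℝ) ^ ((1:ℝ)/ε)) ^ ε := by
            rw [← Real.rpow_mul (by norm_num), one_div, inv_mul_cancel₀ hε.ne', Real.rpow_one]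
        _ ≤ (q:ℝ) ^ ε := Real.rpow_le_rpow (by positivity) hB hε.le
    have hqc' : ((q:ℝ)^c) ^ ε = ((q:ℝ) ^ ε) ^ c := by
      rw [← Real.rpow_natCast (q:ℝ) c, ← Real.rpow_mul (by positivity), mul_comm,
        Real.rpow_mul (by positivity), Real.rpow_natCast]
    rw [one_mul, hqc']
    calc ((c:ℝ) + 1) ≤ (2:ℝ) ^ c := by
          have := Nat.lt_two_pow_self (n := c)
          have : (c:ℝ) + 1 ≤ ((2:ℕ):ℝ) ^ c := by exact_mod_cast Nat.succ_le_of_lt this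
          simpa using this
      _ ≤ ((q:ℝ) ^ ε) ^ c := pow_le_pow_left₀ (by norm_num) hqe c

lemma small_count (s : Finset GaussianInt) (B : ℝ) (hB : 1 ≤ B) :
    (s.filter (fun π => (gnorm π : ℝ) < B)).card ≤ (2 * ⌈B⌉₊ + 1)^2 := by
  classical
  set R : ℕ := ⌈B⌉₊ with hR
  have hR1 : 1 ≤ R := Nat.one_le_ceil_iff.mpr (by linarith)
  have hBR : B ≤ (R : ℝ) := Nat.le_ceil B
  have key : ∀ π ∈ s.filter (fun π => (gnorm π : ℝ) < B),
      π.re ∈ Finset.Icc (-(R:ℤ)) (R:ℤ) ∧ π.im ∈ Finset.Icc (-(R:ℤ)) (R:ℤ) := by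
    intro π hπ
    have hlt : (gnorm π : ℝ) < B := (Finset.mem_filter.mp hπ).2
    have hre2 : (π.re : ℝ)^2 + (π.im : ℝ)^2 = (gnorm π : ℝ) := by
      have : ((gnorm π : ℤ) : ℝ) = (π.norm : ℝ) := by
        simp [gnorm, GaussianInt.natCast_natAbs_norm]
      push_cast at this ⊢
      rw [this]
      simp [Zsqrtd.norm]
      ring
    have h1 : (π.re : ℝ)^2 < (R:ℝ)^2 := by
      have hRR : (R:ℝ) ≤ (R:ℝ)^2 := by nlinarith [(Nat.one_le_cast (α := ℝ)).mpr hR1]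
      nlinarith [sq_nonneg (π.im : ℝ)]
    have h2 : (π.im : ℝ)^2 < (R:ℝ)^2 := by
      have hRR : (R:ℝ) ≤ (R:ℝ)^2 := by nlinarith [(Nat.one_le_cast (α := ℝ)).mpr hR1]
      nlinarith [sq_nonneg (π.re : ℝ)]
    have hRpos : (0:ℝ) < (R:ℝ) := by exact_mod_cast hR1
    constructor
    · rw [Finset.mem_Icc]
      constructor
      · have : -(R:ℝ) ≤ (π.re : ℝ) := by nlinarith
        exact_mod_cast this
      · have : (π.re : ℝ) ≤ (R:ℝ) := by nlinarith
        exact_mod_cast this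
    · rw [Finset.mem_Icc]
      constructor
      · have : -(R:ℝ) ≤ (π.im : ℝ) := by nlinarith
        exact_mod_cast this
      · have : (π.im : ℝ) ≤ (R:ℝ) := by nlinarith
        exact_mod_cast this
  have hinj : Set.InjOn (fun π : GaussianInt => (π.re, π.im))
      (s.filter (fun π => (gnorm π : ℝ) < B)) := by
    intro a _ b _ hab
    exact Zsqrtd.ext (congrArg Prod.fst hab) (congrArg Prod.snd hab)
  have := Finset.card_le_card_of_injOn (fun π : GaussianInt => (π.re, π.im))
    (fun π hπ => Finset.mem_product.mpr ⟨(key π hπ).1, (key π hπ).2⟩) hinj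
  refine this.trans ?_
  rw [Finset.card_product, Int.card_Icc]
  have : ((R:ℤ) + 1 - -(R:ℤ)).toNat = 2 * R + 1 := by omega
  rw [this]
  ring_nf
  exact le_refl _

lemma dcount_bound (ε : ℝ) (hε : 0 < ε) : ∃ C > (0:ℝ), ∀ m : GaussianInt, m ≠ 0 →
    (Nat.card {b : GaussianInt // b ∣ m} : ℝ) ≤ C * (gnorm m : ℝ) ^ ε := by
  classical
  set B : ℝ := (2:ℝ) ^ ((1:ℝ)/ε) with hBdef
  set M0 : ℝ := 1 + 1/(ε * Real.log 2) with hM0def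
  have hlog2 : 0 < Real.log 2 := Real.log_pos one_lt_two
  have hM0 : 1 ≤ M0 := by
    have h : 0 < 1/(ε * Real.log 2) := by positivity
    simp only [hM0def]
    linarith
  have hB1 : 1 ≤ B := Real.one_le_rpow one_le_two (by positivity)
  set K : ℕ := (2 * ⌈B⌉₊ + 1)^2 with hKdef
  refine ⟨4 * M0 ^ K, by positivity, ?_⟩
  intro m hm
  set F := normalizedFactors m with hF
  -- primes have norm ≥ 2
  have hq2 : ∀ π ∈ F.toFinset, 2 ≤ gnorm π := by
    intro π hπ
    have hp : Prime π := prime_of_normalized_factor π (Multiset.mem_toFinset.mp hπ)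
    have h0 : gnorm π ≠ 0 := by
      simp only [gnorm, MonoidHom.coe_mk, OneHom.coe_mk]
      intro h
      exact hp.ne_zero ((Zsqrtd.norm_eq_zero_iff (by norm_num) π).mp (Int.natAbs_eq_zero.mp h))
    have h1 : gnorm π ≠ 1 := fun h => hp.not_unit (Zsqrtd.norm_eq_one_iff.mp h)
    omega
  -- step 1
  have step1 : (Nat.card {b : GaussianInt // b ∣ m} : ℝ) ≤
      4 * ∏ π ∈ F.toFinset, ((F.count π : ℝ) + 1) := by
    have := card_dvd_le m hm
    calc (Nat.card {b : GaussianInt // b ∣ m} : ℝ)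
        ≤ ((4 * ∏ π ∈ F.toFinset, (F.count π + 1) : ℕ) : ℝ) := by exact_mod_cast this
      _ = 4 * ∏ π ∈ F.toFinset, ((F.count π : ℝ) + 1) := by push_cast; ring
  -- step 2 : pointwise bound and product
  have step2 : ∏ π ∈ F.toFinset, ((F.count π : ℝ) + 1) ≤
      (∏ π ∈ F.toFinset, (if (gnorm π : ℝ) < B then M0 else 1)) *
        (∏ π ∈ F.toFinset, ((gnorm π : ℝ) ^ (F.count π)) ^ ε) := by
    rw [← Finset.prod_mul_distrib]
    apply Finset.prod_le_prod
    · intro π _; positivity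
    · intro π hπ
      exact perprime ε hε (gnorm π) (F.count π) (hq2 π hπ)
  -- the rpow product is gnorm m ^ ε
  have step3 : ∏ π ∈ F.toFinset, ((gnorm π : ℝ) ^ (F.count π)) ^ ε
      = ((gnorm m : ℝ)) ^ ε := by
    rw [Real.finset_prod_rpow _ _ (fun π _ => by positivity) ε]
    congr 1
    rw [gnorm_factorization m hm]
    push_cast
    rfl
  -- the weight product is at most M0 ^ K
  have step4 : (∏ π ∈ F.toFinset, (if (gnorm π : ℝ) < B then M0 else 1)) ≤ M0 ^ K := by
    rw [Finset.prod_ite, Finset.prod_const, Finset.prod_const, one_pow, mul_one]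
    exact pow_le_pow_right₀ hM0 (small_count F.toFinset B hB1)
  have hnn : (0:ℝ) ≤ (gnorm m : ℝ) ^ ε := by positivity
  calc (Nat.card {b : GaussianInt // b ∣ m} : ℝ)
      ≤ 4 * ∏ π ∈ F.toFinset, ((F.count π : ℝ) + 1) := step1
    _ ≤ 4 * ((∏ π ∈ F.toFinset, (if (gnorm π : ℝ) < B then M0 else 1)) *
        (∏ π ∈ F.toFinset, ((gnorm π : ℝ) ^ (F.count π)) ^ ε)) := by
        apply mul_le_mul_of_nonneg_left step2 (by norm_num)
    _ = 4 * (∏ π ∈ F.toFinset, (if (gnorm π : ℝ) < B then M0 else 1)) * ((gnorm m : ℝ)) ^ ε := by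
        rw [step3]; ring
    _ ≤ 4 * M0 ^ K * ((gnorm m : ℝ)) ^ ε := by
        apply mul_le_mul_of_nonneg_right _ hnn
        apply mul_le_mul_of_nonneg_left step4 (by norm_num)

lemma gnorm_eq (z : GaussianInt) : (gnorm z : ℝ) = (z.re : ℝ)^2 + (z.im : ℝ)^2 := by
  have h : ((gnorm z : ℤ) : ℝ) = (z.norm : ℝ) := by
    simp [gnorm, GaussianInt.natCast_natAbs_norm]
  push_cast at h ⊢
  rw [h]
  simp [Zsqrtd.norm]
  ring

lemma abs_sq_eq (z : GaussianInt) :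
    (‖GaussianInt.toComplex z‖)^2 = (gnorm z : ℝ) := by
  rw [Complex.sq_norm, ← GaussianInt.intCast_real_norm]
  simp [gnorm]

def embZZ : ℤ × ℤ ↪ GaussianInt :=
  ⟨fun p => ⟨p.1, p.2⟩, fun p q h => by
    cases p; cases q
    simpa [Zsqrtd.ext_iff, Prod.ext_iff] using h⟩

set_option maxHeartbeats 1000000 in
/-- For every `ε > 0` there is `C > 0` such that for all real `X ≥ 2` and every
`t ∈ ℤ[i]`, the number of `g = [[a,b],[c,d]] ∈ SL₂(ℤ[i])` with
`|a|² + |b|² + |c|² + |d|² < X²` and trace `a + d = t` is at most `C · X^{2+ε}`. -/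
theorem stmt9 : ∀ ε > (0 : ℝ), ∃ C > (0 : ℝ), ∀ X : ℝ, 2 ≤ X → ∀ t : GaussianInt,
    (Nat.card {g : Matrix.SpecialLinearGroup (Fin 2) GaussianInt //
        (‖GaussianInt.toComplex ((g : Matrix (Fin 2) (Fin 2) GaussianInt) 0 0)‖ ^ 2 +
         ‖GaussianInt.toComplex ((g : Matrix (Fin 2) (Fin 2) GaussianInt) 0 1)‖ ^ 2 +
         ‖GaussianInt.toComplex ((g : Matrix (Fin 2) (Fin 2) GaussianInt) 1 0)‖ ^ 2 +
         ‖GaussianInt.toComplex ((g : Matrix (Fin 2) (Fin 2) GaussianInt) 1 1)‖ ^ 2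
          < X ^ 2) ∧
        (g : Matrix (Fin 2) (Fin 2) GaussianInt) 0 0 +
          (g : Matrix (Fin 2) (Fin 2) GaussianInt) 1 1 = t} : ℝ)
      ≤ C * X ^ ((2 : ℝ) + ε) := by
  classical
  intro ε hε
  obtain ⟨C₀, hC₀, hdiv⟩ := dcount_bound (ε/4) (by positivity)
  refine ⟨72 + 9 * (9:ℝ) ^ (ε/4) * C₀, by positivity, ?_⟩
  intro X hX t
  have hX0 : (0:ℝ) < X := by linarith
  have hX1 : (1:ℝ) ≤ X := by linarith
  set N : ℕ := ⌊X⌋₊ with hNdef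
  have hNX : (N:ℝ) ≤ X := Nat.floor_le hX0.le
  set Ball : Finset GaussianInt :=
    ((Finset.Icc (-(N:ℤ)) (N:ℤ)) ×ˢ (Finset.Icc (-(N:ℤ)) (N:ℤ))).map embZZ with hBall
  have mem_Ball : ∀ z : GaussianInt,
      z ∈ Ball ↔ (z.re ∈ Finset.Icc (-(N:ℤ)) (N:ℤ) ∧ z.im ∈ Finset.Icc (-(N:ℤ)) (N:ℤ)) := by
    intro z
    constructor
    · rintro hz
      rw [hBall, Finset.mem_map] at hz
      obtain ⟨p, hp, hpz⟩ := hz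
      have h1 : p.1 = z.re := by rw [← hpz]; rfl
      have h2 : p.2 = z.im := by rw [← hpz]; rfl
      rw [Finset.mem_product] at hp
      exact ⟨h1 ▸ hp.1, h2 ▸ hp.2⟩
    · rintro ⟨h1, h2⟩
      rw [hBall, Finset.mem_map]
      exact ⟨(z.re, z.im), Finset.mem_product.mpr ⟨h1, h2⟩, rfl⟩
  -- small norm implies membership
  have hmem : ∀ z : GaussianInt, (‖GaussianInt.toComplex z‖)^2 < X^2 → z ∈ Ball := by
    intro z hz
    rw [abs_sq_eq, gnorm_eq] at hz
    have hre : (z.re : ℝ) ≤ X ∧ -X ≤ (z.re : ℝ) := by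
      constructor <;> nlinarith [sq_nonneg (z.im : ℝ)]
    have him : (z.im : ℝ) ≤ X ∧ -X ≤ (z.im : ℝ) := by
      constructor <;> nlinarith [sq_nonneg (z.re : ℝ)]
    rw [mem_Ball]
    have hkey : ∀ a : ℤ, (a:ℝ) ≤ X → a ≤ (N:ℤ) := by
      intro a ha
      have h := Int.le_floor.mpr ha
      rwa [hNdef, Int.natCast_floor_eq_floor hX0.le]
    have k1 : z.re ≤ (N:ℤ) := hkey z.re hre.1
    have k2 : -z.re ≤ (N:ℤ) := hkey (-z.re) (by push_cast; linarith [hre.2])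
    have k3 : z.im ≤ (N:ℤ) := hkey z.im him.1
    have k4 : -z.im ≤ (N:ℤ) := hkey (-z.im) (by push_cast; linarith [him.2])
    constructor <;> rw [Finset.mem_Icc] <;> omega
  -- members of Ball have small norm
  have hBallnorm : ∀ z ∈ Ball, (gnorm z : ℝ) ≤ 2 * X^2 := by
    intro z hz
    rw [mem_Ball, Finset.mem_Icc, Finset.mem_Icc] at hz
    have h1 : ((z.re:ℝ)) ≤ (N:ℝ) := by exact_mod_cast hz.1.2
    have h2 : -(N:ℝ) ≤ ((z.re:ℝ)) := by exact_mod_cast hz.1.1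
    have h3 : ((z.im:ℝ)) ≤ (N:ℝ) := by exact_mod_cast hz.2.2
    have h4 : -(N:ℝ) ≤ ((z.im:ℝ)) := by exact_mod_cast hz.2.1
    rw [gnorm_eq]
    nlinarith
  -- cardinality of the ball
  have hBcard : (Ball.card : ℝ) ≤ 9 * X^2 := by
    have hc : Ball.card = (2*N+1) * (2*N+1) := by
      rw [hBall, Finset.card_map, Finset.card_product, Int.card_Icc]
      have : ((N:ℤ) + 1 - -(N:ℤ)).toNat = 2*N+1 := by omega
      rw [this]
    rw [hc]
    push_cast
    nlinarith
  set mf : GaussianInt → GaussianInt := fun a => a * (t - a) - 1 with hmf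
  set A : Finset GaussianInt := Ball.filter (fun a => t - a ∈ Ball) with hA
  set T : Finset (GaussianInt × GaussianInt × GaussianInt) :=
    (A ×ˢ (Ball ×ˢ Ball)).filter (fun x => x.2.1 * x.2.2 = mf x.1) with hT
  -- step: card S ≤ card T
  set S := {g : Matrix.SpecialLinearGroup (Fin 2) GaussianInt //
        (‖GaussianInt.toComplex ((g : Matrix (Fin 2) (Fin 2) GaussianInt) 0 0)‖ ^ 2 +
         ‖GaussianInt.toComplex ((g : Matrix (Fin 2) (Fin 2) GaussianInt) 0 1)‖ ^ 2 +
         ‖GaussianInt.toComplex ((g : Matrix (Fin 2) (Fin 2) GaussianInt) 1 0)‖ ^ 2 +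
         ‖GaussianInt.toComplex ((g : Matrix (Fin 2) (Fin 2) GaussianInt) 1 1)‖ ^ 2
          < X ^ 2) ∧
        (g : Matrix (Fin 2) (Fin 2) GaussianInt) 0 0 +
          (g : Matrix (Fin 2) (Fin 2) GaussianInt) 1 1 = t} with hS
  have key : ∀ g : S,
      ((g.1 : Matrix (Fin 2) (Fin 2) GaussianInt) 0 0, (g.1 : Matrix (Fin 2) (Fin 2) GaussianInt) 0 1,
       (g.1 : Matrix (Fin 2) (Fin 2) GaussianInt) 1 0) ∈ T := by
    rintro ⟨g, hg1, hg2⟩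
    set a := (g : Matrix (Fin 2) (Fin 2) GaussianInt) 0 0
    set b := (g : Matrix (Fin 2) (Fin 2) GaussianInt) 0 1
    set c := (g : Matrix (Fin 2) (Fin 2) GaussianInt) 1 0
    set d := (g : Matrix (Fin 2) (Fin 2) GaussianInt) 1 1
    have hnn : ∀ w : GaussianInt, (0:ℝ) ≤ (‖GaussianInt.toComplex w‖)^2 := by
      intro w; positivity
    have ha : a ∈ Ball := hmem a (by nlinarith [hnn b, hnn c, hnn d])
    have hb : b ∈ Ball := hmem b (by nlinarith [hnn a, hnn c, hnn d])
    have hc : c ∈ Ball := hmem c (by nlinarith [hnn a, hnn b, hnn d])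
    have hd : d ∈ Ball := hmem d (by nlinarith [hnn a, hnn b, hnn c])
    have hdet : a * d - b * c = 1 := by
      have := g.2
      rwa [Matrix.det_fin_two] at this
    have hdta : d = t - a := by rw [← hg2]; ring
    rw [hT, Finset.mem_filter, Finset.mem_product, Finset.mem_product]
    refine ⟨⟨?_, hb, hc⟩, ?_⟩
    · rw [hA, Finset.mem_filter]
      exact ⟨ha, by rw [← hdta]; exact hd⟩
    · show b * c = mf a
      rw [hmf]
      simp only []
      rw [← hdta]
      linear_combination -hdet
  -- injectivity into T
  have hcardS : (Nat.card S : ℝ) ≤ (T.card : ℝ) := by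
    have hle : Nat.card S ≤ Nat.card ↥T := by
      apply Nat.card_le_card_of_injective (fun g : S => (⟨_, key g⟩ : ↥T))
      rintro g₁ g₂ hgg
      have h := congrArg Subtype.val hgg
      simp only [] at h
      rw [Prod.ext_iff, Prod.ext_iff] at h
      obtain ⟨h00, h01, h10⟩ : _ ∧ _ ∧ _ := ⟨h.1, h.2.1, h.2.2⟩
      dsimp only at h00 h01 h10
      have h11 : (g₁.1 : Matrix (Fin 2) (Fin 2) GaussianInt) 1 1
          = (g₂.1 : Matrix (Fin 2) (Fin 2) GaussianInt) 1 1 := by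
        have e₁ := g₁.2.2
        have e₂ := g₂.2.2
        have : (g₁.1 : Matrix (Fin 2) (Fin 2) GaussianInt) 0 0 +
            (g₁.1 : Matrix (Fin 2) (Fin 2) GaussianInt) 1 1
            = (g₂.1 : Matrix (Fin 2) (Fin 2) GaussianInt) 0 0 +
            (g₂.1 : Matrix (Fin 2) (Fin 2) GaussianInt) 1 1 := by rw [e₁, e₂]
        rw [h00] at this
        exact add_left_cancel this
      apply Subtype.ext
      apply Subtype.ext
      refine Matrix.ext ?_
      intro i j
      fin_cases i <;> fin_cases j <;> first
        | exact h00 | exact h01 | exact h10 | exact h11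
    calc (Nat.card S : ℝ) ≤ (Nat.card ↥T : ℝ) := by exact_mod_cast hle
      _ = (T.card : ℝ) := by rw [Nat.card_eq_finsetCard]
  -- fiberwise count
  set cnt : GaussianInt → ℕ :=
    fun a => ((Ball ×ˢ Ball).filter (fun p => p.1 * p.2 = mf a)).card with hcnt
  have hTsum : T.card ≤ ∑ a ∈ A, cnt a := by
    have hmaps : ∀ x ∈ T, x.1 ∈ A := by
      intro x hx
      rw [hT, Finset.mem_filter, Finset.mem_product] at hx
      exact hx.1.1
    rw [Finset.card_eq_sum_card_fiberwise hmaps]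
    apply Finset.sum_le_sum
    intro a _
    apply Finset.card_le_card_of_injOn (fun x => x.2)
    · intro x hx
      rw [Finset.mem_coe, Finset.mem_filter] at hx
      obtain ⟨hxT, hxa⟩ := hx
      rw [hT, Finset.mem_filter, Finset.mem_product] at hxT
      rw [Finset.mem_coe, Finset.mem_filter]
      exact ⟨hxT.1.2, by rw [← hxa]; exact hxT.2⟩
    · rintro x hx y hy hxy
      rw [Finset.mem_coe, Finset.mem_filter] at hx hy
      have : x.1 = y.1 := by rw [hx.2, hy.2]
      exact Prod.ext this hxy
  -- zero fibers
  have hzero_card : (A.filter (fun a => mf a = 0)).card ≤ 4 := by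
    have hsub : A.filter (fun a => mf a = 0) ⊆ U4 := by
      intro a ha
      rw [Finset.mem_filter] at ha
      have : a * (t - a) = 1 := by
        have := ha.2
        rw [hmf] at this
        simp only [] at this
        linear_combination this
      exact mem_U4 (Dvd.intro _ this)
    have : U4.card ≤ 4 := by decide
    exact (Finset.card_le_card hsub).trans this
  have hzero_cnt : ∀ a : GaussianInt, mf a = 0 → cnt a ≤ 2 * Ball.card := by
    intro a ha
    rw [hcnt]
    simp only []
    have hsub : (Ball ×ˢ Ball).filter (fun p => p.1 * p.2 = mf a) ⊆
        (({(0:GaussianInt)} : Finset GaussianInt) ×ˢ Ball) ∪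
        (Ball ×ˢ ({(0:GaussianInt)} : Finset GaussianInt)) := by
      intro p hp
      rw [Finset.mem_filter, Finset.mem_product] at hp
      have : p.1 * p.2 = 0 := by rw [hp.2, ha]
      rcases mul_eq_zero.mp this with h | h
      · exact Finset.mem_union_left _ (Finset.mem_product.mpr ⟨by simp [h], hp.1.2⟩)
      · exact Finset.mem_union_right _ (Finset.mem_product.mpr ⟨hp.1.1, by simp [h]⟩)
    calc ((Ball ×ˢ Ball).filter (fun p => p.1 * p.2 = mf a)).card
        ≤ _ := Finset.card_le_card hsub
      _ ≤ (({(0:GaussianInt)} : Finset GaussianInt) ×ˢ Ball).card +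
          (Ball ×ˢ ({(0:GaussianInt)} : Finset GaussianInt)).card := Finset.card_union_le _ _
      _ ≤ 2 * Ball.card := by
          rw [Finset.card_product, Finset.card_product, Finset.card_singleton]
          omega
  -- nonzero fibers
  have hnz_cnt : ∀ a ∈ A, mf a ≠ 0 → (cnt a : ℝ) ≤ C₀ * (9:ℝ)^(ε/4) * X^ε := by
    intro a haA ha
    -- norm bound on mf a
    rw [hA, Finset.mem_filter] at haA
    have haB : a ∈ Ball := haA.1
    have htaB : t - a ∈ Ball := haA.2
    have hr : (‖GaussianInt.toComplex a‖)^2 ≤ 2 * X^2 := by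
      rw [abs_sq_eq]; exact hBallnorm a haB
    have hs : (‖GaussianInt.toComplex (t - a)‖)^2 ≤ 2 * X^2 := by
      rw [abs_sq_eq]; exact hBallnorm _ htaB
    have hw : (gnorm (mf a) : ℝ) ≤ 9 * X^4 := by
      rw [← abs_sq_eq]
      set r := ‖GaussianInt.toComplex a‖ with hrdef
      set s := ‖GaussianInt.toComplex (t - a)‖ with hsdef
      have hr0 : 0 ≤ r := norm_nonneg _
      have hs0 : 0 ≤ s := norm_nonneg _
      have htri : ‖GaussianInt.toComplex (mf a)‖ ≤ r * s + 1 := by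
        have hmfc : GaussianInt.toComplex (mf a)
            = GaussianInt.toComplex a * GaussianInt.toComplex (t - a) - 1 := by
          rw [hmf]; simp only []; push_cast [map_sub, map_mul, map_one]; ring
        rw [hmfc]
        calc ‖GaussianInt.toComplex a * GaussianInt.toComplex (t - a) - 1‖
            ≤ ‖GaussianInt.toComplex a * GaussianInt.toComplex (t - a)‖
              + ‖(1:ℂ)‖ := by
              exact norm_sub_le _ _
          _ = r * s + 1 := by rw [norm_mul, norm_one]
      have hw0 : 0 ≤ ‖GaussianInt.toComplex (mf a)‖ := norm_nonneg _
      have hrs : r * s ≤ 2 * X^2 := by nlinarith [sq_nonneg (r - s)]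
      have hX2 : (1:ℝ) ≤ X^2 := by nlinarith
      have hwle : ‖GaussianInt.toComplex (mf a)‖ ≤ 2*X^2 + 1 := by linarith
      nlinarith [mul_le_mul hwle hwle hw0 (by positivity : (0:ℝ) ≤ 2*X^2+1)]
    -- divisor count
    haveI : Finite GaussianIntˣ := by
      refine Finite.of_injective (fun u : GaussianIntˣ =>
        (⟨(u : GaussianInt), mem_U4 (isUnit_iff_dvd_one.mp u.isUnit)⟩ : U4)) ?_
      intro u v huv
      exact Units.ext (congrArg Subtype.val huv)
    haveI : Fintype GaussianIntˣ := Fintype.ofFinite _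
    haveI : Fintype {b : GaussianInt // b ∣ mf a} :=
      UniqueFactorizationMonoid.fintypeSubtypeDvd _ ha
    have hcnt_dvd : ((Ball ×ˢ Ball).filter (fun p => p.1 * p.2 = mf a)).card
        ≤ Nat.card {b : GaussianInt // b ∣ mf a} := by
      rw [← Nat.card_eq_finsetCard]
      apply Nat.card_le_card_of_injective
        (fun p : ↥((Ball ×ˢ Ball).filter (fun p => p.1 * p.2 = mf a)) =>
          (⟨p.1.1, Dvd.intro _ ((Finset.mem_filter.mp p.2).2)⟩ : {b : GaussianInt // b ∣ mf a}))
      rintro ⟨p, hp⟩ ⟨q, hq⟩ hpq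
      have h1 : p.1 = q.1 := congrArg Subtype.val hpq
      have hp2 := (Finset.mem_filter.mp hp).2
      have hq2 := (Finset.mem_filter.mp hq).2
      have hp1 : p.1 ≠ 0 := by
        intro h0
        apply ha
        rw [← hp2, h0, zero_mul]
      have h2 : p.2 = q.2 := by
        apply mul_left_cancel₀ hp1
        rw [hp2, h1, hq2]
      exact Subtype.ext (Prod.ext h1 h2)
    calc (cnt a : ℝ) ≤ (Nat.card {b : GaussianInt // b ∣ mf a} : ℝ) := by exact_mod_cast hcnt_dvd
      _ ≤ C₀ * (gnorm (mf a) : ℝ) ^ (ε/4) := hdiv _ ha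
      _ ≤ C₀ * ((9:ℝ) * X^4) ^ (ε/4) := by
          apply mul_le_mul_of_nonneg_left _ hC₀.le
          apply Real.rpow_le_rpow (by positivity) (by linarith [hw]) (by positivity)
      _ = C₀ * (9:ℝ)^(ε/4) * X^ε := by
          rw [Real.mul_rpow (by norm_num) (by positivity),
            ← Real.rpow_natCast X 4, ← Real.rpow_mul hX0.le,
            show ((4:ℕ):ℝ) * (ε/4) = ε by push_cast; ring]
          ring
  -- assemble
  have hAcard : (A.card : ℝ) ≤ 9 * X^2 := by
    have : A.card ≤ Ball.card := Finset.card_le_card (Finset.filter_subset _ _)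
    calc (A.card : ℝ) ≤ (Ball.card : ℝ) := by exact_mod_cast this
      _ ≤ 9 * X^2 := hBcard
  have hsplit : ∑ a ∈ A, cnt a
      = ∑ a ∈ A.filter (fun a => mf a = 0), cnt a
        + ∑ a ∈ A.filter (fun a => ¬ mf a = 0), cnt a :=
    (Finset.sum_filter_add_sum_filter_not A _ _).symm
  have hzero_sum : ((∑ a ∈ A.filter (fun a => mf a = 0), cnt a : ℕ) : ℝ) ≤ 72 * X^2 := by
    have h1 : ∑ a ∈ A.filter (fun a => mf a = 0), cnt a
        ≤ (A.filter (fun a => mf a = 0)).card * (2 * Ball.card) := by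
      apply Finset.sum_le_card_nsmul
      intro a ha
      exact hzero_cnt a (Finset.mem_filter.mp ha).2
    have h2 : (A.filter (fun a => mf a = 0)).card * (2 * Ball.card) ≤ 4 * (2 * Ball.card) :=
      Nat.mul_le_mul_right _ hzero_card
    calc ((∑ a ∈ A.filter (fun a => mf a = 0), cnt a : ℕ) : ℝ)
        ≤ ((4 * (2 * Ball.card) : ℕ) : ℝ) := by exact_mod_cast h1.trans h2
      _ = 8 * (Ball.card : ℝ) := by push_cast; ring
      _ ≤ 8 * (9 * X^2) := by linarith [hBcard]
      _ = 72 * X^2 := by ring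
  have hnz_sum : ((∑ a ∈ A.filter (fun a => ¬ mf a = 0), cnt a : ℕ) : ℝ)
      ≤ 9 * X^2 * (C₀ * (9:ℝ)^(ε/4) * X^ε) := by
    have hcast : ((∑ a ∈ A.filter (fun a => ¬ mf a = 0), cnt a : ℕ) : ℝ)
        = ∑ a ∈ A.filter (fun a => ¬ mf a = 0), (cnt a : ℝ) := by push_cast; rfl
    rw [hcast]
    have h1 : ∑ a ∈ A.filter (fun a => ¬ mf a = 0), (cnt a : ℝ)
        ≤ ∑ _a ∈ A.filter (fun a => ¬ mf a = 0), (C₀ * (9:ℝ)^(ε/4) * X^ε) := by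
      apply Finset.sum_le_sum
      intro a ha
      have hm := Finset.mem_filter.mp ha
      exact hnz_cnt a hm.1 hm.2
    rw [Finset.sum_const] at h1
    have h2 : ((A.filter (fun a => ¬ mf a = 0)).card : ℝ) ≤ 9 * X^2 := by
      have : (A.filter (fun a => ¬ mf a = 0)).card ≤ A.card :=
        Finset.card_le_card (Finset.filter_subset _ _)
      calc ((A.filter (fun a => ¬ mf a = 0)).card : ℝ) ≤ (A.card : ℝ) := by exact_mod_cast this
        _ ≤ 9 * X^2 := hAcard
    have h3 : (0:ℝ) ≤ C₀ * (9:ℝ)^(ε/4) * X^ε := by positivity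
    calc ∑ a ∈ A.filter (fun a => ¬ mf a = 0), (cnt a : ℝ)
        ≤ ((A.filter (fun a => ¬ mf a = 0)).card : ℝ) * (C₀ * (9:ℝ)^(ε/4) * X^ε) := by
          simpa [nsmul_eq_mul] using h1
      _ ≤ 9 * X^2 * (C₀ * (9:ℝ)^(ε/4) * X^ε) := by
          apply mul_le_mul_of_nonneg_right h2 h3
  -- final computation
  have hXe : (1:ℝ) ≤ X^ε := Real.one_le_rpow hX1 hε.le
  have hP : X ^ ((2:ℝ) + ε) = X^2 * X^ε := by
    rw [Real.rpow_add hX0]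
    congr 1
    rw [show ((2:ℝ)) = ((2:ℕ):ℝ) by norm_num, Real.rpow_natCast]
  have hX2pos : (0:ℝ) < X^2 := by positivity
  have h9 : (0:ℝ) < (9:ℝ)^(ε/4) := by positivity
  calc (Nat.card S : ℝ) ≤ (T.card : ℝ) := hcardS
    _ ≤ ((∑ a ∈ A, cnt a : ℕ) : ℝ) := by exact_mod_cast hTsum
    _ = ((∑ a ∈ A.filter (fun a => mf a = 0), cnt a : ℕ) : ℝ)
        + ((∑ a ∈ A.filter (fun a => ¬ mf a = 0), cnt a : ℕ) : ℝ) := by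
        rw [hsplit]; push_cast; ring
    _ ≤ 72 * X^2 + 9 * X^2 * (C₀ * (9:ℝ)^(ε/4) * X^ε) := by
        linarith [hzero_sum, hnz_sum]
    _ ≤ (72 + 9 * (9:ℝ)^(ε/4) * C₀) * X ^ ((2:ℝ) + ε) := by
        rw [hP]
        nlinarith [mul_pos hX2pos (lt_of_lt_of_le one_pos hXe), hXe, hX2pos, h9, hC₀,
          mul_le_mul_of_nonneg_left hXe hX2pos.le]
end

section
/- There is a constant C > 0 such that for all real X ≥ 1, the number of matrices g = [[a,b],[c,d]] ∈ SL₂(ℤ[i]) with |a|² + |b|² + |c|² + |d|² < X² is at most C·X⁴. -/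
lemma sum_inv_one_add_sq (M : ℤ) (hM : 0 ≤ M) :
    ∑ x ∈ Finset.Icc (-M) M, (1 : ℝ) / (1 + (x : ℝ) ^ 2) ≤ 5 := by
  have key : ∀ M : ℤ, 0 ≤ M →
      ∑ x ∈ Finset.Icc (-M) M, (1 : ℝ) / (1 + (x : ℝ) ^ 2) ≤ 5 - 4 / ((M : ℝ) + 1) := by
    intro M hM
    refine Int.le_induction (motive := fun M _ => ∑ x ∈ Finset.Icc (-M) M, (1:ℝ)/(1+(x:ℝ)^2) ≤ 5 - 4/((M:ℝ)+1)) ?_ ?_ M hM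
    · norm_num
    · intro N hN ih
      have ih' := ih
      have hsplit : Finset.Icc (-(N + 1)) (N + 1) =
          insert (-(N + 1)) (insert (N + 1) (Finset.Icc (-N) N)) := by
        ext x
        simp only [Finset.mem_Icc, Finset.mem_insert]
        omega
      have h1 : (-(N + 1)) ∉ insert (N + 1) (Finset.Icc (-N) N) := by
        simp only [Finset.mem_insert, Finset.mem_Icc]
        omega
      have h2 : (N + 1) ∉ Finset.Icc (-N) N := by
        simp only [Finset.mem_Icc]; omega
      rw [hsplit, Finset.sum_insert h1, Finset.sum_insert h2]
      have hc : ((-(N + 1) : ℤ) : ℝ) ^ 2 = ((N : ℝ) + 1) ^ 2 := by push_cast; ring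
      have hc2 : (((N + 1) : ℤ) : ℝ) = (N : ℝ) + 1 := by push_cast; ring
      rw [hc, hc2]
      have hN' : (0 : ℝ) ≤ (N : ℝ) := by exact_mod_cast hN
      have hpos1 : (0 : ℝ) < (N : ℝ) + 1 := by linarith
      have hpos2 : (0 : ℝ) < (N : ℝ) + 2 := by linarith
      have hpos3 : (0 : ℝ) < 1 + ((N : ℝ) + 1) ^ 2 := by positivity
      have hkey : 2 / (1 + ((N : ℝ) + 1) ^ 2) ≤ 4 / ((N : ℝ) + 1) - 4 / ((N : ℝ) + 2) := by
        rw [div_sub_div _ _ (ne_of_gt hpos1) (ne_of_gt hpos2), div_le_div_iff₀ hpos3 (by positivity)]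
        nlinarith
      have hkey2 : 1 / (1 + ((N : ℝ) + 1) ^ 2) + 1 / (1 + ((N : ℝ) + 1) ^ 2) ≤
          4 / ((N : ℝ) + 1) - 4 / ((N : ℝ) + 2) := by
        rw [show (1:ℝ) / (1 + ((N : ℝ) + 1) ^ 2) + 1 / (1 + ((N : ℝ) + 1) ^ 2)
            = 2 / (1 + ((N : ℝ) + 1) ^ 2) from by ring]
        exact hkey
      have : ((N : ℝ) + 1 + 1) = (N : ℝ) + 2 := by ring
      push_cast
      rw [show ((N:ℝ) + 1 + 1) = (N:ℝ) + 2 by ring]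
      linarith [ih', hkey2]
  have := key M hM
  have h1 : (0 : ℝ) < (M : ℝ) + 1 := by
    have : (0 : ℝ) ≤ (M : ℝ) := by exact_mod_cast hM
    linarith
  have : 4 / ((M : ℝ) + 1) ≥ 0 := by positivity
  linarith [key M hM]


open GaussianInt

lemma gi_abs_sq (z : GaussianInt) :
    ‖GaussianInt.toComplex z‖ ^ 2 = (Zsqrtd.norm z : ℝ) := by
  rw [Complex.sq_norm, GaussianInt.intCast_real_norm]

lemma gi_norm_def (z : GaussianInt) : Zsqrtd.norm z = z.re ^ 2 + z.im ^ 2 := by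
  rw [Zsqrtd.norm_def]; ring

lemma int_mem_Icc_ceil (w : ℤ) (Y : ℝ) (hY : 0 ≤ Y) (h : (w : ℝ) ^ 2 < Y ^ 2) :
    w ∈ Finset.Icc (-⌈Y⌉) ⌈Y⌉ := by
  rw [Finset.mem_Icc]
  have h1 : (w : ℝ) ≤ Y := by nlinarith
  have h2 : -Y ≤ (w : ℝ) := by nlinarith
  constructor
  · have : (-w : ℤ) ≤ ⌈Y⌉ := by
      rw [← Int.ceil_intCast (R := ℝ) (-w)]
      exact Int.ceil_le_ceil (by push_cast; linarith)
    omega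
  · rw [← Int.ceil_intCast (R := ℝ) w]
    exact Int.ceil_le_ceil h1

lemma int_mem_Icc_floor (w : ℤ) (R : ℝ) (hR : 0 ≤ R) (h : (w : ℝ) ^ 2 < R ^ 2) :
    w ∈ Finset.Icc (-⌊R⌋) ⌊R⌋ := by
  rw [Finset.mem_Icc]
  have h1 : (w : ℝ) ≤ R := by nlinarith
  have h2 : -R ≤ (w : ℝ) := by nlinarith
  refine ⟨?_, Int.le_floor.mpr h1⟩
  have : (-w : ℤ) ≤ ⌊R⌋ := Int.le_floor.mpr (by push_cast; linarith)
  omega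

lemma fiber_bound (X : ℝ) (hX : 1 ≤ X) (t : ℤ × ℤ) (ht : t ≠ (0, 0))
    (P : Finset ((ℤ × ℤ) × ((ℤ × ℤ) × (ℤ × ℤ))))
    (hcond : ∀ p ∈ P, 1 ≤ (p.2.1.1 ^ 2 + p.2.1.2 ^ 2 + p.2.2.1 ^ 2 + p.2.2.2 ^ 2 : ℤ) ∧
      ((p.1.1 ^ 2 + p.1.2 ^ 2 : ℤ) : ℝ) *
        ((p.2.1.1 ^ 2 + p.2.1.2 ^ 2 + p.2.2.1 ^ 2 + p.2.2.2 ^ 2 : ℤ) : ℝ) < 4 * X ^ 2) :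
    (((P.filter fun p => p.1 = t).card : ℝ)) ≤
      1296 * X ^ 4 / ((t.1 ^ 2 + t.2 ^ 2 : ℤ) : ℝ) ^ 2 := by
  classical
  have hm1 : 1 ≤ (t.1 ^ 2 + t.2 ^ 2 : ℤ) := by
    rcases eq_or_ne t.1 0 with h1 | h1
    · rcases eq_or_ne t.2 0 with h2 | h2
      · exact absurd (Prod.ext h1 h2) ht
      · have := Int.one_le_abs h2
        nlinarith [sq_nonneg t.1, sq_abs t.2]
    · have := Int.one_le_abs h1
      nlinarith [sq_nonneg t.2, sq_abs t.1]
  have hmR : (1 : ℝ) ≤ ((t.1 ^ 2 + t.2 ^ 2 : ℤ) : ℝ) := by exact_mod_cast hm1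
  have hmpos : (0 : ℝ) < ((t.1 ^ 2 + t.2 ^ 2 : ℤ) : ℝ) := by linarith
  rcases Finset.eq_empty_or_nonempty (P.filter fun p => p.1 = t) with he | ⟨p₀, hp₀⟩
  · rw [he]
    simp only [Finset.card_empty, Nat.cast_zero]
    positivity
  · obtain ⟨hp₀P, hp₀t⟩ := Finset.mem_filter.mp hp₀
    obtain ⟨hn1, hmn⟩ := hcond p₀ hp₀P
    have hn1R : (1 : ℝ) ≤ ((p₀.2.1.1 ^ 2 + p₀.2.1.2 ^ 2 + p₀.2.2.1 ^ 2 + p₀.2.2.2 ^ 2 : ℤ) : ℝ) := by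
      exact_mod_cast hn1
    rw [hp₀t] at hmn
    have hm4 : ((t.1 ^ 2 + t.2 ^ 2 : ℤ) : ℝ) < 4 * X ^ 2 := by nlinarith
    set m : ℝ := ((t.1 ^ 2 + t.2 ^ 2 : ℤ) : ℝ) with hm
    have hsq : 0 < Real.sqrt m := Real.sqrt_pos.mpr hmpos
    set R : ℝ := 2 * X / Real.sqrt m with hR
    have hRpos : 0 < R := by positivity
    have hRsq : R ^ 2 = 4 * X ^ 2 / m := by
      rw [hR, div_pow, Real.sq_sqrt (le_of_lt hmpos)]; ring
    have hsm : Real.sqrt m < 2 * X := by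
      rw [show (4 : ℝ) * X ^ 2 = (2 * X) ^ 2 by ring] at hm4
      exact (Real.sqrt_lt' (by linarith)).mpr hm4
    have hR1 : 1 < R := (one_lt_div hsq).mpr hsm
    set K : ℤ := ⌊R⌋ with hK
    set J : Finset ℤ := Finset.Icc (-K) K with hJ
    have hmem : ∀ p ∈ P.filter fun p => p.1 = t, p.2 ∈ (J ×ˢ J) ×ˢ (J ×ˢ J) := by
      intro p hp
      obtain ⟨hpP, hpt⟩ := Finset.mem_filter.mp hp
      obtain ⟨hn1', hmn'⟩ := hcond p hpP
      rw [hpt] at hmn'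
      have hcoord : ∀ w : ℤ, w ^ 2 ≤ (p.2.1.1 ^ 2 + p.2.1.2 ^ 2 + p.2.2.1 ^ 2 + p.2.2.2 ^ 2 : ℤ) →
          w ∈ J := by
        intro w hw
        have hn' : ((w : ℝ)) ^ 2 ≤
            ((p.2.1.1 ^ 2 + p.2.1.2 ^ 2 + p.2.2.1 ^ 2 + p.2.2.2 ^ 2 : ℤ) : ℝ) := by
          exact_mod_cast hw
        have hwR : ((w : ℝ)) ^ 2 * m < 4 * X ^ 2 := by
          rw [← hm] at hmn'
          nlinarith [hn', hmpos, hmn']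
        have : ((w : ℝ)) ^ 2 < R ^ 2 := by
          rw [hRsq, lt_div_iff₀ hmpos]
          exact hwR
        exact int_mem_Icc_floor w R (le_of_lt hRpos) this
      refine Finset.mem_product.mpr ⟨Finset.mem_product.mpr ⟨?_, ?_⟩, Finset.mem_product.mpr ⟨?_, ?_⟩⟩
      · exact hcoord _ (by nlinarith [sq_nonneg p.2.1.2, sq_nonneg p.2.2.1, sq_nonneg p.2.2.2])
      · exact hcoord _ (by nlinarith [sq_nonneg p.2.1.1, sq_nonneg p.2.2.1, sq_nonneg p.2.2.2])
      · exact hcoord _ (by nlinarith [sq_nonneg p.2.1.1, sq_nonneg p.2.1.2, sq_nonneg p.2.2.2])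
      · exact hcoord _ (by nlinarith [sq_nonneg p.2.1.1, sq_nonneg p.2.1.2, sq_nonneg p.2.2.1])
    have hinj : Set.InjOn Prod.snd ((P.filter fun p => p.1 = t) : Set ((ℤ × ℤ) × ((ℤ × ℤ) × (ℤ × ℤ)))) := by
      intro p hp q hq hpq
      have hpt := (Finset.mem_filter.mp hp).2
      have hqt := (Finset.mem_filter.mp hq).2
      exact Prod.ext (hpt.trans hqt.symm) hpq
    have hcard : (P.filter fun p => p.1 = t).card ≤ ((J ×ˢ J) ×ˢ (J ×ˢ J)).card :=
      Finset.card_le_card_of_injOn Prod.snd hmem hinj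
    have hJcard : ((J.card : ℝ)) ≤ 3 * R := by
      rw [hJ, Int.card_Icc]
      have hK1 : 1 ≤ K := Int.le_floor.mpr (by simpa using le_of_lt hR1)
      have h2K : (0 : ℤ) ≤ K + 1 - -K := by omega
      have hKR : (K : ℝ) ≤ R := Int.floor_le R
      have hcast : ((K + 1 - -K).toNat : ℝ) = 2 * (K : ℝ) + 1 := by
        rw [show ((K + 1 - -K).toNat : ℝ) = (((K + 1 - -K).toNat : ℤ) : ℝ) by push_cast; ring,
          Int.toNat_of_nonneg h2K]
        push_cast; ring
      rw [hcast]; linarith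
    have hJ0 : (0 : ℝ) ≤ (J.card : ℝ) := Nat.cast_nonneg _
    have hcardR : ((P.filter fun p => p.1 = t).card : ℝ) ≤ (3 * R) ^ 4 := by
      calc ((P.filter fun p => p.1 = t).card : ℝ) ≤ (((J ×ˢ J) ×ˢ (J ×ˢ J)).card : ℝ) := by
            exact_mod_cast hcard
        _ = ((J.card : ℝ)) ^ 4 := by
            simp only [Finset.card_product]
            push_cast; ring
        _ ≤ (3 * R) ^ 4 := by
            have h3R : (0:ℝ) ≤ 3 * R := by positivity
            exact pow_le_pow_left₀ hJ0 hJcard 4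
    calc ((P.filter fun p => p.1 = t).card : ℝ) ≤ (3 * R) ^ 4 := hcardR
      _ = 81 * (R ^ 2) ^ 2 := by ring
      _ = 1296 * X ^ 4 / m ^ 2 := by
          rw [hRsq]
          field_simp
          ring

lemma one_le_msum (t : ℤ × ℤ) (ht : t ≠ (0, 0)) : 1 ≤ (t.1 ^ 2 + t.2 ^ 2 : ℤ) := by
  rcases eq_or_ne t.1 0 with h1 | h1
  · rcases eq_or_ne t.2 0 with h2 | h2
    · exact absurd (Prod.ext h1 h2) ht
    · have := Int.one_le_abs h2
      nlinarith [sq_nonneg t.1, sq_abs t.2]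
  · have := Int.one_le_abs h1
    nlinarith [sq_nonneg t.2, sq_abs t.1]

lemma count_lemma (X : ℝ) (hX : 1 ≤ X) (M₁ M₂ : ℤ) (hM1 : 0 ≤ M₁) (hM1' : (M₁ : ℝ) ≤ 2 * X)
    (hM2 : 0 ≤ M₂)
    (P : Finset ((ℤ × ℤ) × ((ℤ × ℤ) × (ℤ × ℤ))))
    (hsub : P ⊆ (Finset.Icc (-M₂) M₂ ×ˢ Finset.Icc (-M₂) M₂) ×ˢ
      ((Finset.Icc (-M₁) M₁ ×ˢ Finset.Icc (-M₁) M₁) ×ˢ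
        (Finset.Icc (-M₁) M₁ ×ˢ Finset.Icc (-M₁) M₁)))
    (hcond : ∀ p ∈ P, 1 ≤ (p.2.1.1 ^ 2 + p.2.1.2 ^ 2 + p.2.2.1 ^ 2 + p.2.2.2 ^ 2 : ℤ) ∧
      ((p.1.1 ^ 2 + p.1.2 ^ 2 : ℤ) : ℝ) *
        ((p.2.1.1 ^ 2 + p.2.1.2 ^ 2 + p.2.2.1 ^ 2 + p.2.2.2 ^ 2 : ℤ) : ℝ) < 4 * X ^ 2) :
    (P.card : ℝ) ≤ 10 ^ 6 * X ^ 4 := by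
  classical
  have hX4 : (0 : ℝ) ≤ X ^ 4 := by positivity
  have hfib : P.card = ∑ t ∈ Finset.Icc (-M₂) M₂ ×ˢ Finset.Icc (-M₂) M₂,
      (P.filter fun p => p.1 = t).card :=
    Finset.card_eq_sum_card_fiberwise (fun p hp => (Finset.mem_product.mp (hsub hp)).1)
  have h00 : ((0, 0) : ℤ × ℤ) ∈ Finset.Icc (-M₂) M₂ ×ˢ Finset.Icc (-M₂) M₂ := by
    simp only [Finset.mem_product, Finset.mem_Icc]
    omega
  have hzero : ((P.filter fun p => p.1 = ((0, 0) : ℤ × ℤ)).card : ℝ) ≤ 625 * X ^ 4 := by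
    have hmemV : ∀ p ∈ P.filter (fun p => p.1 = ((0, 0) : ℤ × ℤ)), p.2 ∈
        (Finset.Icc (-M₁) M₁ ×ˢ Finset.Icc (-M₁) M₁) ×ˢ
          (Finset.Icc (-M₁) M₁ ×ˢ Finset.Icc (-M₁) M₁) := by
      intro p hp
      exact (Finset.mem_product.mp (hsub (Finset.mem_filter.mp hp).1)).2
    have hinj : Set.InjOn Prod.snd
        ((P.filter fun p => p.1 = ((0, 0) : ℤ × ℤ)) : Set ((ℤ × ℤ) × ((ℤ × ℤ) × (ℤ × ℤ)))) := by
      intro p hp q hq hpq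
      exact Prod.ext ((Finset.mem_filter.mp hp).2.trans ((Finset.mem_filter.mp hq).2).symm) hpq
    have hcard := Finset.card_le_card_of_injOn Prod.snd hmemV hinj
    have hI : ((Finset.Icc (-M₁) M₁).card : ℝ) ≤ 5 * X := by
      rw [Int.card_Icc]
      have h2 : (0 : ℤ) ≤ M₁ + 1 - -M₁ := by omega
      have hc : ((M₁ + 1 - -M₁).toNat : ℝ) = 2 * (M₁ : ℝ) + 1 := by
        rw [show ((M₁ + 1 - -M₁).toNat : ℝ) = (((M₁ + 1 - -M₁).toNat : ℤ) : ℝ) by push_cast; ring,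
          Int.toNat_of_nonneg h2]
        push_cast; ring
      rw [hc]; linarith
    calc ((P.filter fun p => p.1 = ((0, 0) : ℤ × ℤ)).card : ℝ)
        ≤ (((Finset.Icc (-M₁) M₁ ×ˢ Finset.Icc (-M₁) M₁) ×ˢ
          (Finset.Icc (-M₁) M₁ ×ˢ Finset.Icc (-M₁) M₁)).card : ℝ) := by exact_mod_cast hcard
      _ = ((Finset.Icc (-M₁) M₁).card : ℝ) ^ 4 := by
          simp only [Finset.card_product]; push_cast; ring
      _ ≤ (5 * X) ^ 4 := pow_le_pow_left₀ (Nat.cast_nonneg _) hI 4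
      _ = 625 * X ^ 4 := by ring
  have hrest : ∑ t ∈ (Finset.Icc (-M₂) M₂ ×ˢ Finset.Icc (-M₂) M₂).erase ((0, 0) : ℤ × ℤ),
      ((P.filter fun p => p.1 = t).card : ℝ) ≤ 129600 * X ^ 4 := by
    have hstep1 : ∀ t ∈ (Finset.Icc (-M₂) M₂ ×ˢ Finset.Icc (-M₂) M₂).erase ((0, 0) : ℤ × ℤ),
        ((P.filter fun p => p.1 = t).card : ℝ) ≤
          1296 * X ^ 4 * (4 * (1 / (1 + (t.1 : ℝ) ^ 2)) * (1 / (1 + (t.2 : ℝ) ^ 2))) := by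
      intro t htm
      have ht0 : t ≠ ((0, 0) : ℤ × ℤ) := (Finset.mem_erase.mp htm).1
      have h1 := fiber_bound X hX t ht0 P hcond
      have hx : (0 : ℝ) < 1 + (t.1 : ℝ) ^ 2 := by positivity
      have hy : (0 : ℝ) < 1 + (t.2 : ℝ) ^ 2 := by positivity
      have hmZ := one_le_msum t ht0
      have hm : (1 : ℝ) ≤ ((t.1 ^ 2 + t.2 ^ 2 : ℤ) : ℝ) := by exact_mod_cast hmZ
      have hb : (1 + (t.1 : ℝ) ^ 2) * (1 + (t.2 : ℝ) ^ 2) ≤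
          4 * ((t.1 ^ 2 + t.2 ^ 2 : ℤ) : ℝ) ^ 2 := by
        push_cast at hm ⊢
        nlinarith [sq_nonneg ((t.1 : ℝ) * (t.2 : ℝ)), sq_nonneg ((t.1 : ℝ) ^ 2 + (t.2 : ℝ) ^ 2)]
      refine le_trans h1 ?_
      have heq : 1296 * X ^ 4 * (4 * (1 / (1 + (t.1 : ℝ) ^ 2)) * (1 / (1 + (t.2 : ℝ) ^ 2))) =
          (1296 * X ^ 4 * 4) / ((1 + (t.1 : ℝ) ^ 2) * (1 + (t.2 : ℝ) ^ 2)) := by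
        field_simp
      rw [heq, div_le_div_iff₀ (by positivity) (by positivity)]
      nlinarith [hb, hX4, mul_le_mul_of_nonneg_left hb (by positivity : (0:ℝ) ≤ 1296 * X ^ 4)]
    have hsum : ∑ t ∈ Finset.Icc (-M₂) M₂ ×ˢ Finset.Icc (-M₂) M₂,
        (1296 * X ^ 4 * (4 * (1 / (1 + (t.1 : ℝ) ^ 2)) * (1 / (1 + (t.2 : ℝ) ^ 2)))) =
        1296 * X ^ 4 * 4 * ((∑ x ∈ Finset.Icc (-M₂) M₂, 1 / (1 + (x : ℝ) ^ 2)) *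
          (∑ y ∈ Finset.Icc (-M₂) M₂, 1 / (1 + (y : ℝ) ^ 2))) := by
      rw [Finset.sum_product, Finset.sum_mul_sum, Finset.mul_sum]
      refine Finset.sum_congr rfl fun x _ => ?_
      rw [Finset.mul_sum]
      refine Finset.sum_congr rfl fun y _ => ?_
      ring
    have hs5 := sum_inv_one_add_sq M₂ hM2
    have hs0 : (0 : ℝ) ≤ ∑ x ∈ Finset.Icc (-M₂) M₂, 1 / (1 + (x : ℝ) ^ 2) :=
      Finset.sum_nonneg fun x _ => by positivity
    calc ∑ t ∈ (Finset.Icc (-M₂) M₂ ×ˢ Finset.Icc (-M₂) M₂).erase ((0, 0) : ℤ × ℤ),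
          ((P.filter fun p => p.1 = t).card : ℝ)
        ≤ ∑ t ∈ (Finset.Icc (-M₂) M₂ ×ˢ Finset.Icc (-M₂) M₂).erase ((0, 0) : ℤ × ℤ),
          (1296 * X ^ 4 * (4 * (1 / (1 + (t.1 : ℝ) ^ 2)) * (1 / (1 + (t.2 : ℝ) ^ 2)))) :=
          Finset.sum_le_sum hstep1
      _ ≤ ∑ t ∈ Finset.Icc (-M₂) M₂ ×ˢ Finset.Icc (-M₂) M₂,
          (1296 * X ^ 4 * (4 * (1 / (1 + (t.1 : ℝ) ^ 2)) * (1 / (1 + (t.2 : ℝ) ^ 2)))) :=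
          Finset.sum_le_sum_of_subset_of_nonneg (Finset.erase_subset _ _)
            (fun t _ _ => by positivity)
      _ = 1296 * X ^ 4 * 4 * ((∑ x ∈ Finset.Icc (-M₂) M₂, 1 / (1 + (x : ℝ) ^ 2)) *
          (∑ y ∈ Finset.Icc (-M₂) M₂, 1 / (1 + (y : ℝ) ^ 2))) := hsum
      _ ≤ 1296 * X ^ 4 * 4 * (5 * 5) := by
          have h25 : (∑ x ∈ Finset.Icc (-M₂) M₂, 1 / (1 + (x : ℝ) ^ 2)) *
              (∑ y ∈ Finset.Icc (-M₂) M₂, 1 / (1 + (y : ℝ) ^ 2)) ≤ 5 * 5 :=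
            mul_le_mul hs5 hs5 hs0 (by norm_num)
          nlinarith [hX4, h25]
      _ = 129600 * X ^ 4 := by ring
  have : (P.card : ℝ) = ((P.filter fun p => p.1 = ((0, 0) : ℤ × ℤ)).card : ℝ) +
      ∑ t ∈ (Finset.Icc (-M₂) M₂ ×ˢ Finset.Icc (-M₂) M₂).erase ((0, 0) : ℤ × ℤ),
        ((P.filter fun p => p.1 = t).card : ℝ) := by
    rw [hfib]
    rw [← Finset.add_sum_erase _ _ h00]
    push_cast
    ring
  rw [this]
  nlinarith [hzero, hrest, hX4]

lemma gi_norm_sub_le (x y : GaussianInt) :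
    ((x - y).norm : ℝ) ≤ 2 * (x.norm : ℝ) + 2 * (y.norm : ℝ) := by
  rw [← gi_abs_sq, ← gi_abs_sq, ← gi_abs_sq]
  have h1 : ‖toComplex (x - y)‖ ≤
      ‖toComplex x‖ + ‖toComplex y‖ := by
    rw [map_sub]
    exact norm_sub_le _ _
  nlinarith [h1, norm_nonneg (toComplex x), norm_nonneg (toComplex y),
    norm_nonneg (toComplex (x - y)),
    sq_nonneg (‖toComplex x‖ - ‖toComplex y‖)]


open GaussianInt


lemma main_core (X : ℝ) (hX : 1 ≤ X) {S : Type}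
    (π : S → Matrix (Fin 2) (Fin 2) GaussianInt)
    (hπ : Function.Injective π)
    (hdet : ∀ g, (π g).det = 1)
    (hnorm : ∀ g : S, (Zsqrtd.norm (π g 0 0) : ℝ) + (Zsqrtd.norm (π g 0 1) : ℝ) +
      (Zsqrtd.norm (π g 1 0) : ℝ) + (Zsqrtd.norm (π g 1 1) : ℝ) < X ^ 2) :
    (Nat.card S : ℝ) ≤ 10 ^ 6 * X ^ 4 := by
  classical
  rcases isEmpty_or_nonempty S with hemp | hne
  · rw [Nat.card_of_isEmpty]
    simp only [Nat.cast_zero]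
    positivity
  obtain ⟨g₀⟩ := hne
  have hX0 : (0 : ℝ) < X := lt_of_lt_of_le one_pos hX
  set M₁ : ℤ := ⌈X⌉ with hM₁
  set M₂ : ℤ := ⌈2 * X⌉ with hM₂
  set A : S → GaussianInt := fun g => π g 0 0 with hA
  set B : S → GaussianInt := fun g => π g 0 1 with hB
  set C : S → GaussianInt := fun g => π g 1 0 with hC
  set D : S → GaussianInt := fun g => π g 1 1 with hD
  have hdet2 : ∀ g, A g * D g - B g * C g = 1 := by
    intro g
    have := hdet g
    rw [Matrix.det_fin_two] at this
    exact this
  have hN : ∀ g : S, ((A g).norm : ℝ) + ((B g).norm : ℝ) + ((C g).norm : ℝ) +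
      ((D g).norm : ℝ) < X ^ 2 := hnorm
  have hNnn : ∀ z : GaussianInt, (0 : ℝ) ≤ (z.norm : ℝ) := by
    intro z
    exact_mod_cast GaussianInt.norm_nonneg z
  obtain ⟨rep, hrep⟩ : ∃ rep : GaussianInt × GaussianInt → S,
      ∀ g : S, A (rep (A g, C g)) = A g ∧ C (rep (A g, C g)) = C g := by
    refine ⟨fun v => if h : ∃ g : S, (A g, C g) = v then h.choose else g₀, fun g => ?_⟩
    have h : ∃ g' : S, (A g', C g') = (A g, C g) := ⟨g, rfl⟩
    simp only [dif_pos h]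
    have hh := h.choose_spec
    exact ⟨congrArg Prod.fst hh, congrArg Prod.snd hh⟩
  set tt : S → GaussianInt := fun g => B g * D (rep (A g, C g)) - B (rep (A g, C g)) * D g
    with htt
  have hBD : ∀ g : S, B g = B (rep (A g, C g)) + tt g * A g ∧
      D g = D (rep (A g, C g)) + tt g * C g := by
    intro g
    have h1 := hdet2 g
    have h2 := hdet2 (rep (A g, C g))
    rw [(hrep g).1, (hrep g).2] at h2
    constructor
    · simp only [htt]
      linear_combination (B (rep (A g, C g))) * h1 - (B g) * h2
    · simp only [htt]
      linear_combination (D (rep (A g, C g))) * h1 - (D g) * h2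
  have hA0 : ∀ g : S, 1 ≤ (A g).norm + (C g).norm := by
    intro g
    by_contra h
    push_neg at h
    have h1 := GaussianInt.norm_nonneg (A g)
    have h2 := GaussianInt.norm_nonneg (C g)
    have hAz : (A g).norm = 0 := by omega
    have hCz : (C g).norm = 0 := by omega
    have hA' : A g = 0 := GaussianInt.norm_eq_zero.mp hAz
    have hC' : C g = 0 := GaussianInt.norm_eq_zero.mp hCz
    have hd := hdet2 g
    rw [hA', hC'] at hd
    simp at hd
  have hkey2 : ∀ g : S, ((tt g).norm : ℝ) * (((A g).norm : ℝ) + ((C g).norm : ℝ)) <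
      4 * X ^ 2 := by
    intro g
    obtain ⟨hb, hd⟩ := hBD g
    have h1 : tt g * A g = B g - B (rep (A g, C g)) := by rw [hb]; ring
    have h2 : tt g * C g = D g - D (rep (A g, C g)) := by rw [hd]; ring
    have hn1 : (tt g).norm * (A g).norm = (B g - B (rep (A g, C g))).norm := by
      rw [← Zsqrtd.norm_mul, h1]
    have hn2 : (tt g).norm * (C g).norm = (D g - D (rep (A g, C g))).norm := by
      rw [← Zsqrtd.norm_mul, h2]
    have heq : ((tt g).norm : ℝ) * (((A g).norm : ℝ) + ((C g).norm : ℝ)) =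
        ((B g - B (rep (A g, C g))).norm : ℝ) + ((D g - D (rep (A g, C g))).norm : ℝ) := by
      rw [← hn1, ← hn2]
      push_cast
      ring
    rw [heq]
    have hb1 := gi_norm_sub_le (B g) (B (rep (A g, C g)))
    have hb2 := gi_norm_sub_le (D g) (D (rep (A g, C g)))
    have he1 := hN g
    have he2 := hN (rep (A g, C g))
    have n1 := hNnn (A g); have n2 := hNnn (C g)
    have n3 := hNnn (A (rep (A g, C g))); have n4 := hNnn (C (rep (A g, C g)))
    linarith
  set P : Finset ((ℤ × ℤ) × ((ℤ × ℤ) × (ℤ × ℤ))) :=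
    ((Finset.Icc (-M₂) M₂ ×ˢ Finset.Icc (-M₂) M₂) ×ˢ
      ((Finset.Icc (-M₁) M₁ ×ˢ Finset.Icc (-M₁) M₁) ×ˢ
        (Finset.Icc (-M₁) M₁ ×ˢ Finset.Icc (-M₁) M₁))).filter
      (fun p => 1 ≤ (p.2.1.1 ^ 2 + p.2.1.2 ^ 2 + p.2.2.1 ^ 2 + p.2.2.2 ^ 2 : ℤ) ∧
        ((p.1.1 ^ 2 + p.1.2 ^ 2 : ℤ) : ℝ) *
          ((p.2.1.1 ^ 2 + p.2.1.2 ^ 2 + p.2.2.1 ^ 2 + p.2.2.2 ^ 2 : ℤ) : ℝ) < 4 * X ^ 2)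
    with hP
  have hmem : ∀ g : S,
      (((tt g).re, (tt g).im), (((A g).re, (A g).im), ((C g).re, (C g).im))) ∈ P := by
    intro g
    have hA0g := hA0 g
    have hA0R : (1 : ℝ) ≤ ((A g).norm : ℝ) + ((C g).norm : ℝ) := by exact_mod_cast hA0g
    have hk2 := hkey2 g
    have httn : ((tt g).norm : ℝ) < 4 * X ^ 2 := by
      nlinarith [hNnn (tt g)]
    have he := hN g
    have hAn : ((A g).norm : ℝ) < X ^ 2 := by
      have := hNnn (B g); have := hNnn (C g); have := hNnn (D g)
      linarith
    have hCn : ((C g).norm : ℝ) < X ^ 2 := by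
      have := hNnn (A g); have := hNnn (B g); have := hNnn (D g)
      linarith
    have hsq : ∀ z : GaussianInt, ((z.re : ℝ)) ^ 2 ≤ (z.norm : ℝ) ∧
        ((z.im : ℝ)) ^ 2 ≤ (z.norm : ℝ) := by
      intro z
      have h : (z.norm : ℝ) = (z.re : ℝ) ^ 2 + (z.im : ℝ) ^ 2 := by
        rw [gi_norm_def]; push_cast; ring
      rw [h]
      constructor <;> nlinarith [sq_nonneg (z.re : ℝ), sq_nonneg (z.im : ℝ)]
    rw [hP, Finset.mem_filter]
    refine ⟨?_, ?_, ?_⟩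
    · refine Finset.mem_product.mpr ⟨Finset.mem_product.mpr ⟨?_, ?_⟩,
        Finset.mem_product.mpr ⟨Finset.mem_product.mpr ⟨?_, ?_⟩,
          Finset.mem_product.mpr ⟨?_, ?_⟩⟩⟩
      · exact int_mem_Icc_ceil _ (2 * X) (by linarith)
          (lt_of_le_of_lt ((hsq (tt g)).1) (by nlinarith))
      · exact int_mem_Icc_ceil _ (2 * X) (by linarith)
          (lt_of_le_of_lt ((hsq (tt g)).2) (by nlinarith))
      · exact int_mem_Icc_ceil _ X (by linarith)
          (lt_of_le_of_lt ((hsq (A g)).1) (by nlinarith))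
      · exact int_mem_Icc_ceil _ X (by linarith)
          (lt_of_le_of_lt ((hsq (A g)).2) (by nlinarith))
      · exact int_mem_Icc_ceil _ X (by linarith)
          (lt_of_le_of_lt ((hsq (C g)).1) (by nlinarith))
      · exact int_mem_Icc_ceil _ X (by linarith)
          (lt_of_le_of_lt ((hsq (C g)).2) (by nlinarith))
    · show 1 ≤ (A g).re ^ 2 + (A g).im ^ 2 + (C g).re ^ 2 + (C g).im ^ 2
      have h := hA0 g
      rw [gi_norm_def, gi_norm_def] at h
      linarith
    · show (((tt g).re ^ 2 + (tt g).im ^ 2 : ℤ) : ℝ) *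
          (((A g).re ^ 2 + (A g).im ^ 2 + (C g).re ^ 2 + (C g).im ^ 2 : ℤ) : ℝ) < 4 * X ^ 2
      have e1 : ((tt g).re ^ 2 + (tt g).im ^ 2 : ℤ) = (tt g).norm := (gi_norm_def _).symm
      have e2 : ((A g).re ^ 2 + (A g).im ^ 2 + (C g).re ^ 2 + (C g).im ^ 2 : ℤ) =
          (A g).norm + (C g).norm := by rw [gi_norm_def, gi_norm_def]; ring
      rw [e1, e2]
      push_cast
      exact_mod_cast hk2
  have hinj : Function.Injective (fun g : S =>
      ((((tt g).re, (tt g).im), (((A g).re, (A g).im), ((C g).re, (C g).im))) :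
        (ℤ × ℤ) × ((ℤ × ℤ) × (ℤ × ℤ)))) := by
    intro g g' h
    simp only [Prod.mk.injEq] at h
    obtain ⟨⟨ht1, ht2⟩, ⟨ha1, ha2⟩, hc1, hc2⟩ := h
    have hAe : A g = A g' := Zsqrtd.ext ha1 ha2
    have hCe : C g = C g' := Zsqrtd.ext hc1 hc2
    have hte : tt g = tt g' := Zsqrtd.ext ht1 ht2
    have hrepe : rep (A g, C g) = rep (A g', C g') := by rw [hAe, hCe]
    obtain ⟨hb, hd⟩ := hBD g
    obtain ⟨hb', hd'⟩ := hBD g'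
    have hBe : B g = B g' := by rw [hb, hb', hrepe, hte, hAe]
    have hDe : D g = D g' := by rw [hd, hd', hrepe, hte, hCe]
    apply hπ
    apply Matrix.ext
    intro i j
    fin_cases i <;> fin_cases j
    · exact hAe
    · exact hBe
    · exact hCe
    · exact hDe
  have hle : Nat.card S ≤ P.card := by
    have h1 : Nat.card S ≤ Nat.card {p // p ∈ P} := by
      refine Nat.card_le_card_of_injective (fun g => ⟨_, hmem g⟩) ?_
      intro g g' h
      exact hinj (congrArg Subtype.val h)
    simpa [Nat.card_eq_finsetCard] using h1
  have hM1R : (1 : ℝ) ≤ (M₁ : ℝ) := le_trans hX (Int.le_ceil X)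
  have hM1a : 0 ≤ M₁ := by exact_mod_cast le_trans zero_le_one hM1R
  have hM1b : (M₁ : ℝ) ≤ 2 * X := by
    have := Int.ceil_lt_add_one X
    rw [hM₁]
    linarith
  have hM2a : 0 ≤ M₂ := by
    have h2 : (0 : ℝ) ≤ (M₂ : ℝ) := le_trans (by linarith) (Int.le_ceil (2 * X))
    exact_mod_cast h2
  have hcount := count_lemma X hX M₁ M₂ hM1a hM1b hM2a P (Finset.filter_subset _ _)
    (fun p hp => (Finset.mem_filter.mp hp).2)
  calc (Nat.card S : ℝ) ≤ (P.card : ℝ) := by exact_mod_cast hle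
    _ ≤ 10 ^ 6 * X ^ 4 := hcount

/-- There is `C > 0` such that for all real `X ≥ 1`, the number of
`g = [[a,b],[c,d]] ∈ SL₂(ℤ[i])` with `|a|² + |b|² + |c|² + |d|² < X²` is at most `C · X⁴`. -/
theorem stmt10 : ∃ C > (0 : ℝ), ∀ X : ℝ, 1 ≤ X →
    (Nat.card {g : Matrix.SpecialLinearGroup (Fin 2) GaussianInt //
        ‖GaussianInt.toComplex ((g : Matrix (Fin 2) (Fin 2) GaussianInt) 0 0)‖ ^ 2 +
        ‖GaussianInt.toComplex ((g : Matrix (Fin 2) (Fin 2) GaussianInt) 0 1)‖ ^ 2 +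
        ‖GaussianInt.toComplex ((g : Matrix (Fin 2) (Fin 2) GaussianInt) 1 0)‖ ^ 2 +
        ‖GaussianInt.toComplex ((g : Matrix (Fin 2) (Fin 2) GaussianInt) 1 1)‖ ^ 2
          < X ^ 2} : ℝ)
      ≤ C * X ^ 4 := by
  refine ⟨10 ^ 6, by norm_num, ?_⟩
  intro X hX
  refine main_core X hX
    (fun g => ((g : Matrix.SpecialLinearGroup (Fin 2) GaussianInt) :
      Matrix (Fin 2) (Fin 2) GaussianInt)) ?_ ?_ ?_
  · intro g g' h
    exact Subtype.ext (Subtype.ext h)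
  · intro g
    exact g.1.2
  · intro g
    have h := g.2
    rw [gi_abs_sq, gi_abs_sq, gi_abs_sq, gi_abs_sq] at h
    exact h
end
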